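/- arXiv:1504.00173 — 2 statements merged into one kernel-verified Lean document; each statement's English description precedes it below -/
import Mathlib

section
/- Every residually finite group is weakly residually finite: for every Cayley graph G of a residually finite group (with respect to a finite generating set) and every natural number r, there exists a finite graph H such that every ball of radius r in H is isomorphic to the ball of radius r in G. -/
open SimpleGraph

/-- The Cayley graph of a group `Γ` with respect to a generating set `S`. -/
def cayley {Γ : Type*} [Group Γ] (S : Set Γ) : SimpleGraph Γ where
  Adj g h := g ≠ h ∧ (g⁻¹ * h ∈ S ∨ h⁻¹ * g ∈ S)
  symm := ⟨fun g h ⟨hne, hs⟩ => ⟨hne.symm, hs.symm⟩⟩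
  loopless := ⟨fun g ⟨hne, _⟩ => hne rfl⟩

namespace CayleyRF

variable {Γ : Type*} [Group Γ]

/-- `g` is a product of at most `n` elements of `S ∪ S⁻¹`. -/
def word (S : Set Γ) (n : ℕ) (g : Γ) : Prop :=
  ∃ l : List Γ, (∀ x ∈ l, x ∈ S ∨ x⁻¹ ∈ S) ∧ l.length ≤ n ∧ l.prod = g

lemma word_one (S : Set Γ) (n : ℕ) : word S n 1 :=
  ⟨[], by simp, by simp, rfl⟩

lemma word_mono {S : Set Γ} {m n : ℕ} (h : m ≤ n) {g : Γ} (hw : word S m g) :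
    word S n g := by
  obtain ⟨l, h1, h2, h3⟩ := hw; exact ⟨l, h1, h2.trans h, h3⟩

lemma word_mul {S : Set Γ} {m n : ℕ} {g h : Γ} (hg : word S m g) (hh : word S n h) :
    word S (m + n) (g * h) := by
  obtain ⟨l1, a1, b1, c1⟩ := hg; obtain ⟨l2, a2, b2, c2⟩ := hh
  refine ⟨l1 ++ l2, ?_, ?_, by simp [c1, c2]⟩
  · intro x hx; rcases List.mem_append.1 hx with h | h
    exacts [a1 x h, a2 x h]
  · simpa using Nat.add_le_add b1 b2

lemma word_inv {S : Set Γ} {n : ℕ} {g : Γ} (hg : word S n g) : word S n g⁻¹ := by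
  obtain ⟨l, a, b, c⟩ := hg
  refine ⟨(l.map fun x => x⁻¹).reverse, ?_, by simpa using b, ?_⟩
  · intro x hx
    simp only [List.mem_reverse, List.mem_map] at hx
    obtain ⟨y, hy, rfl⟩ := hx
    exact (a y hy).symm.imp id (fun h => by simpa using h)
  · rw [← List.prod_inv_reverse, c]

lemma word_single {S : Set Γ} {y : Γ} (h : y ∈ S ∨ y⁻¹ ∈ S) : word S 1 y :=
  ⟨[y], by simpa using h, by simp, by simp⟩

lemma mem_closure_of_word {S : Set Γ} {n : ℕ} {g : Γ} (hg : word S n g) :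
    g ∈ Subgroup.closure S := by
  obtain ⟨l, a, _, c⟩ := hg
  rw [← c]
  refine list_prod_mem ?_
  intro x hx
  rcases a x hx with h | h
  · exact Subgroup.subset_closure h
  · simpa using inv_mem (Subgroup.subset_closure h)

lemma word_of_mem_closure {S : Set Γ} {g : Γ} (hg : g ∈ Subgroup.closure S) :
    ∃ n, word S n g := by
  induction hg using Subgroup.closure_induction with
  | mem x hx => exact ⟨1, word_single (Or.inl hx)⟩
  | one => exact ⟨0, word_one S 0⟩
  | mul x y _ _ hx hy =>
      obtain ⟨m, hm⟩ := hx; obtain ⟨n, hn⟩ := hy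
      exact ⟨m + n, word_mul hm hn⟩
  | inv x _ hx =>
      obtain ⟨m, hm⟩ := hx
      exact ⟨m, word_inv hm⟩

/-- Left multiplication is an automorphism of the Cayley graph. -/
def mulLeftIso (S : Set Γ) (a : Γ) : cayley S ≃g cayley S where
  toEquiv := Equiv.mulLeft a
  map_rel_iff' := by
    intro g h
    have key : (a * g)⁻¹ * (a * h) = g⁻¹ * h := by group
    have key2 : (a * h)⁻¹ * (a * g) = h⁻¹ * g := by group
    show (cayley S).Adj (a * g) (a * h) ↔ (cayley S).Adj g h
    constructor
    · rintro ⟨hne, hs⟩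
      exact ⟨fun e => hne (by rw [e]), by rwa [key, key2] at hs⟩
    · rintro ⟨hne, hs⟩
      exact ⟨fun e => hne (mul_left_cancel e), by rwa [key, key2]⟩

lemma walk_word {S : Set Γ} : ∀ {a b : Γ} (w : (cayley S).Walk a b),
    word S w.length (a⁻¹ * b) := by
  intro a b w
  induction w with
  | nil => simpa using word_one S 0
  | @cons a c b h p ih =>
      obtain ⟨hne, hs⟩ := h
      have hx : word S 1 (a⁻¹ * c) := by
        refine word_single ?_
        rcases hs with h | h
        · exact Or.inl h
        · exact Or.inr (by simpa [mul_inv_rev] using h)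
      have := word_mul hx ih
      have heq : a⁻¹ * c * (c⁻¹ * b) = a⁻¹ * b := by group
      rw [heq] at this
      exact word_mono (Nat.le_of_eq (Nat.add_comm _ _)) this

lemma word_walk_aux {S : Set Γ} : ∀ (l : List Γ), (∀ x ∈ l, x ∈ S ∨ x⁻¹ ∈ S) →
    ∃ w : (cayley S).Walk 1 l.prod, w.length ≤ l.length := by
  intro l
  induction l with
  | nil => exact fun _ => ⟨Walk.nil.copy rfl (by simp), by simp⟩
  | cons x t ih =>
      intro hmem
      obtain ⟨w, hw⟩ := ih (fun y hy => hmem y (List.mem_cons_of_mem _ hy))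
      by_cases hx1 : x = 1
      · refine ⟨w.copy rfl (by simp [hx1]), ?_⟩
        exact (Walk.length_copy _ _ _).le.trans (hw.trans (Nat.le_succ _))
      · have hadj : (cayley S).Adj 1 x :=
          ⟨Ne.symm hx1, by simpa using hmem x List.mem_cons_self⟩
        let w' : (cayley S).Walk x (x * t.prod) :=
          (w.map (mulLeftIso S x).toHom).copy (by simp [mulLeftIso]) (by simp [mulLeftIso])
        refine ⟨(Walk.cons hadj w').copy rfl (by simp), ?_⟩
        have hlen : w'.length = w.length := (Walk.length_copy _ _ _).trans (Walk.length_map ..)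
        exact (Walk.length_copy _ _ _).le.trans (by simp only [Walk.length_cons, hlen, List.length_cons]; omega)

lemma word_walk {S : Set Γ} {n : ℕ} {g : Γ} (hg : word S n g) :
    ∃ w : (cayley S).Walk 1 g, w.length ≤ n := by
  obtain ⟨l, a, b, c⟩ := hg
  obtain ⟨w, hw⟩ := word_walk_aux l a
  exact ⟨w.copy rfl c, by simpa using hw.trans b⟩

lemma reachable_one {S : Set Γ} (hgen : Subgroup.closure S = ⊤) (g : Γ) :
    (cayley S).Reachable 1 g := by
  have hg : g ∈ Subgroup.closure S := hgen ▸ Subgroup.mem_top g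
  obtain ⟨n, hn⟩ := word_of_mem_closure hg
  obtain ⟨w, _⟩ := word_walk hn
  exact ⟨w⟩

lemma dist_le_iff {S : Set Γ} (hgen : Subgroup.closure S = ⊤) {n : ℕ} {g : Γ} :
    (cayley S).dist 1 g ≤ n ↔ word S n g := by
  constructor
  · intro h
    obtain ⟨w, hw⟩ := (reachable_one hgen g).exists_walk_length_eq_dist
    have := walk_word w
    rw [hw] at this
    simpa using word_mono h this
  · intro h
    obtain ⟨w, hw⟩ := word_walk h
    exact (SimpleGraph.dist_le w).trans hw

lemma dist_mulLeft (S : Set Γ) (a g h : Γ) :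
    (cayley S).dist (a * g) (a * h) = (cayley S).dist g h := by
  have key : ∀ (a g h : Γ), (cayley S).dist (a * g) (a * h) ≤ (cayley S).dist g h := by
    intro a g h
    by_cases hr : (cayley S).Reachable g h
    · obtain ⟨w, hw⟩ := hr.exists_walk_length_eq_dist
      let w' : (cayley S).Walk (a * g) (a * h) :=
        (w.map (mulLeftIso S a).toHom).copy rfl rfl
      have hle : (cayley S).dist (a * g) (a * h) ≤ w'.length := SimpleGraph.dist_le w'
      exact hle.trans ((Walk.length_copy _ _ _).trans ((Walk.length_map ..).trans hw)).le
    · have hr' : ¬ (cayley S).Reachable (a * g) (a * h) := by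
        intro hr'
        have := hr'.map (mulLeftIso S a⁻¹).toHom
        simp only [mulLeftIso] at this
        apply hr
        simpa [inv_mul_cancel_left] using this
      rw [SimpleGraph.dist_eq_zero_of_not_reachable hr']
      exact Nat.zero_le _
  refine le_antisymm (key a g h) ?_
  have := key a⁻¹ (a * g) (a * h)
  simpa [inv_mul_cancel_left] using this

lemma word_finite {S : Set Γ} (hS : S.Finite) : ∀ n : ℕ, {g : Γ | word S n g}.Finite := by
  intro n
  induction n with
  | zero =>
      refine Set.Finite.subset (Set.finite_singleton 1) ?_
      rintro g ⟨l, _, hb, hc⟩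
      rw [Nat.le_zero, List.length_eq_zero_iff] at hb
      simp [hb] at hc
      simp [← hc]
  | succ n ih =>
      have hsub : {g : Γ | word S (n + 1) g} ⊆
          {g : Γ | word S n g} ∪ ⋃ t ∈ S ∪ S⁻¹, (t * ·) '' {g : Γ | word S n g} := by
        rintro g ⟨l, ha, hb, hc⟩
        match l, ha, hb, hc with
        | [], ha, hb, hc => exact Or.inl ⟨[], by simp, by simp, hc⟩
        | x :: t, ha, hb, hc =>
            right
            have hx : x ∈ S ∪ S⁻¹ := by
              rcases ha x List.mem_cons_self with h | h
              · exact Or.inl h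
              · exact Or.inr (by simpa using h)
            refine Set.mem_biUnion hx ?_
            refine ⟨t.prod, ⟨t, fun y hy => ha y (List.mem_cons_of_mem _ hy), ?_, rfl⟩, ?_⟩
            · simpa using Nat.le_of_succ_le_succ (by simpa using hb)
            · simpa using hc
      exact Set.Finite.subset (ih.union ((hS.union hS.inv).biUnion fun t _ => ih.image _))
        hsub

lemma word_map {Q : Type*} [Group Q] (φ : Γ →* Q) {S : Set Γ} {n : ℕ} {g : Γ}
    (hg : word S n g) : word (φ '' S) n (φ g) := by
  obtain ⟨l, a, b, c⟩ := hg
  refine ⟨l.map φ, ?_, by simpa using b, by rw [← map_list_prod, c]⟩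
  intro x hx
  simp only [List.mem_map] at hx
  obtain ⟨y, hy, rfl⟩ := hx
  rcases a y hy with h | h
  · exact Or.inl ⟨y, h, rfl⟩
  · exact Or.inr ⟨y⁻¹, h, by simp⟩

lemma word_map_surj_aux {Q : Type*} [Group Q] (φ : Γ →* Q) (S : Set Γ) :
    ∀ (l : List Q), (∀ x ∈ l, x ∈ φ '' S ∨ x⁻¹ ∈ φ '' S) →
      ∃ g : Γ, word S l.length g ∧ φ g = l.prod := by
  intro l
  induction l with
  | nil => exact fun _ => ⟨1, word_one S 0, by simp⟩
  | cons x t ih =>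
      intro hmem
      obtain ⟨g, hg, hφ⟩ := ih (fun y hy => hmem y (List.mem_cons_of_mem _ hy))
      rcases hmem x List.mem_cons_self with ⟨s, hs, hsx⟩ | ⟨s, hs, hsx⟩
      · refine ⟨s * g, ?_, by rw [map_mul, hφ, hsx]; simp⟩
        simpa [Nat.add_comm] using word_mul (word_single (Or.inl hs)) hg
      · have hx : x = φ s⁻¹ := by rw [map_inv, hsx, inv_inv]
        refine ⟨s⁻¹ * g, ?_, by rw [map_mul, hφ, ← hx, List.prod_cons]⟩
        simpa [Nat.add_comm] using word_mul (word_single (Or.inr (by simpa using hs))) hg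

lemma word_map_surj {Q : Type*} [Group Q] (φ : Γ →* Q) {S : Set Γ} {n : ℕ} {q : Q}
    (hq : word (φ '' S) n q) : ∃ g : Γ, word S n g ∧ φ g = q := by
  obtain ⟨l, a, b, c⟩ := hq
  obtain ⟨g, hg, hφ⟩ := word_map_surj_aux φ S l a
  exact ⟨g, word_mono b hg, by rw [hφ, c]⟩

end CayleyRF

open CayleyRF

/-- Every residually finite group is weakly residually finite: for every Cayley graph `G`
of a residually finite group with respect to a finite generating set `S`, and every `r`,
there is a finite graph `H` all of whose balls of radius `r` are isomorphic to the ball of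
radius `r` (around the identity) in `G`. -/
theorem residually_finite_implies_weakly_residually_finite
    {Γ : Type} [Group Γ] (S : Finset Γ)
    (hgen : Subgroup.closure (S : Set Γ) = ⊤)
    (hrf : ∀ g : Γ, g ≠ 1 → ∃ (Q : Type) (_ : Group Q) (_ : Finite Q) (f : Γ →* Q), f g ≠ 1)
    (r : ℕ) :
    ∃ (W : Type) (_ : Fintype W) (H : SimpleGraph W), Nonempty W ∧
      ∀ x : W, Nonempty ((H.induce {u | H.dist x u ≤ r}) ≃g
        ((cayley (S : Set Γ)).induce {u | (cayley (S : Set Γ)).dist 1 u ≤ r})) := by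
  classical
  set Gc := cayley (S : Set Γ) with hGc
  have hSfin : (S : Set Γ).Finite := S.finite_toSet
  set B : Set Γ := {g : Γ | word (S : Set Γ) (2 * r + 1) g} with hB
  have hBfin : B.Finite := word_finite hSfin _
  let N := {g : Γ // g ∈ B ∧ g ≠ 1}
  haveI : Finite N := by
    have : {g : Γ | g ∈ B ∧ g ≠ 1}.Finite := hBfin.subset (fun g hg => hg.1)
    exact this.to_subtype
  choose Q hQg hQf f hf using fun g : N => hrf g.1 g.2.2
  letI : ∀ g : N, Group (Q g) := hQg
  letI : ∀ g : N, Finite (Q g) := hQf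
  let F : Γ →* ∀ g : N, Q g := Pi.monoidHom f
  let φ : Γ →* F.range := F.rangeRestrict
  haveI : Finite (∀ g : N, Q g) := Pi.finite
  haveI : Finite F.range := Subtype.finite
  have hφsurj : Function.Surjective φ := F.rangeRestrict_surjective
  have hker : ∀ g ∈ B, φ g = 1 → g = 1 := by
    intro g hg h1
    by_contra hne
    have hFg : F g = 1 := by
      have := congrArg Subtype.val h1
      simpa [φ] using this
    exact hf ⟨g, hg, hne⟩ (by simpa [F, Pi.monoidHom] using congrFun hFg ⟨g, hg, hne⟩)
  set W := ↥F.range with hW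
  set T : Set W := φ '' (S : Set Γ) with hT
  set H : SimpleGraph W := cayley T with hH
  have hTgen : Subgroup.closure T = ⊤ := by
    rw [hT, ← MonoidHom.map_closure, hgen]
    rw [← MonoidHom.range_eq_map]
    exact MonoidHom.range_eq_top.2 hφsurj
  have hinj : ∀ g : Γ, word (S : Set Γ) (2 * r + 1) g → φ g = 1 → g = 1 :=
    fun g hg => hker g hg
  -- ball characterizations
  have hGball : ∀ u : Γ, Gc.dist 1 u ≤ r ↔ word (S : Set Γ) r u :=
    fun u => dist_le_iff hgen
  have hHball : ∀ (x u : W), H.dist x u ≤ r ↔ word T r (x⁻¹ * u) := by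
    intro x u
    have h1 : H.dist x u = H.dist 1 (x⁻¹ * u) := by
      rw [hH]
      have := dist_mulLeft T x 1 (x⁻¹ * u)
      exact (congrArg₂ (fun v w => (cayley T).dist v w) (mul_one x) (mul_inv_cancel_left x u)).symm.trans this
    rw [h1]
    exact dist_le_iff hTgen
  -- adjacency correspondence
  have hadj_iff : ∀ a b : Γ, word (S : Set Γ) r a → word (S : Set Γ) r b →
      (Gc.Adj a b ↔ H.Adj (φ a) (φ b)) := by
    intro a b ha hb
    have hab : word (S : Set Γ) (2 * r) (a⁻¹ * b) := by
      have := word_mul (word_inv ha) hb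
      simpa [two_mul] using this
    have hba : word (S : Set Γ) (2 * r) (b⁻¹ * a) := by
      have := word_mul (word_inv hb) ha
      simpa [two_mul] using this
    constructor
    · rintro ⟨hne, hs⟩
      constructor
      · intro e
        apply hne
        have h1 : φ (a⁻¹ * b) = 1 := by rw [map_mul, map_inv, e, inv_mul_cancel]
        exact inv_mul_eq_one.mp (hinj _ (word_mono (by omega) hab) h1)
      · rcases hs with h | h
        · exact Or.inl ⟨a⁻¹ * b, h, by rw [map_mul, map_inv]⟩
        · exact Or.inr ⟨b⁻¹ * a, h, by rw [map_mul, map_inv]⟩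
    · rintro ⟨hne, hs⟩
      refine ⟨fun e => hne (by rw [e]), ?_⟩
      rcases hs with ⟨s, hsS, hφs⟩ | ⟨s, hsS, hφs⟩
      · left
        have h1 : φ (a⁻¹ * b * s⁻¹) = 1 := by
          rw [map_mul, map_mul, map_inv, map_inv, hφs]
          group
        have hword : word (S : Set Γ) (2 * r + 1) (a⁻¹ * b * s⁻¹) :=
          word_mul hab (word_inv (word_single (Or.inl hsS)))
        have h2 : a⁻¹ * b = s := mul_inv_eq_one.mp (hinj _ hword h1)
        rw [h2]; exact hsS
      · right
        have h1 : φ (b⁻¹ * a * s⁻¹) = 1 := by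
          rw [map_mul, map_mul, map_inv, map_inv, hφs]
          group
        have hword : word (S : Set Γ) (2 * r + 1) (b⁻¹ * a * s⁻¹) :=
          word_mul hba (word_inv (word_single (Or.inl hsS)))
        have h2 : b⁻¹ * a = s := mul_inv_eq_one.mp (hinj _ hword h1)
        rw [h2]; exact hsS
  -- the bijection on balls
  let F2 : {g : Γ // word (S : Set Γ) r g} → {q : W // word T r q} :=
    fun g => ⟨φ g.1, word_map φ g.2⟩
  have hF2bij : Function.Bijective F2 := by
    constructor
    · rintro ⟨a, ha⟩ ⟨b, hb⟩ hab
      have heq : φ a = φ b := congrArg Subtype.val hab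
      have h1 : φ (a⁻¹ * b) = 1 := by rw [map_mul, map_inv, heq, inv_mul_cancel]
      have hab : word (S : Set Γ) (2 * r) (a⁻¹ * b) := by
        have := word_mul (word_inv ha) hb
        simpa [two_mul] using this
      have h2 := hinj _ (word_mono (by omega) hab) h1
      exact Subtype.ext (inv_mul_eq_one.mp h2)
    · rintro ⟨q, hq⟩
      obtain ⟨g, hg, hφg⟩ := word_map_surj φ hq
      exact ⟨⟨g, hg⟩, Subtype.ext hφg⟩
  let e2 : {g : Γ // word (S : Set Γ) r g} ≃ {q : W // word T r q} :=
    Equiv.ofBijective F2 hF2bij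
  have isoB : (Gc.induce {u : Γ | word (S : Set Γ) r u}) ≃g
      (H.induce {u : W | word T r u}) :=
    ⟨e2, by
      intro a b
      exact (hadj_iff a.1 b.1 a.2 b.2).symm⟩
  have isoA : ∀ x : W, (H.induce {u : W | word T r (x⁻¹ * u)}) ≃g
      (H.induce {u : W | word T r u}) := by
    intro x
    refine ⟨Equiv.subtypeEquiv (Equiv.mulLeft x⁻¹) (fun u => Iff.rfl), ?_⟩
    intro a b
    exact (mulLeftIso T x⁻¹).map_rel_iff
  refine ⟨W, Fintype.ofFinite W, H, ⟨1⟩, fun x => ?_⟩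
  have hs1 : {u : W | H.dist x u ≤ r} = {u : W | word T r (x⁻¹ * u)} :=
    Set.ext fun u => hHball x u
  have hs2 : {u : Γ | Gc.dist 1 u ≤ r} = {u : Γ | word (S : Set Γ) r u} :=
    Set.ext fun u => hGball u
  rw [hs1, hs2]
  exact ⟨(isoA x).trans isoB.symm⟩
end

section
/- Let G be a connected, locally finite, vertex-transitive graph with exactly one end, and let d be the common degree of its vertices. Then the vertex connectivity of G is at least 3(d+1)/4. -/
set_option linter.unusedSectionVars false

open SimpleGraph

/-- A locally finite graph has exactly one end if for every finite vertex set `K` there is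
exactly one infinite component of the complement of `K`. -/
def OneEnded {V : Type*} (G : SimpleGraph V) : Prop :=
  ∀ K : Finset V, ∃! C : G.ComponentCompl (K : Set V), C.supp.Infinite

namespace BW

variable {V : Type*} (G : SimpleGraph V)

/-- Reachability avoiding a finite set `W`. -/
def AReach (W : Finset V) (x y : V) : Prop :=
  ∃ w : G.Walk x y, ∀ v ∈ w.support, v ∉ W

variable {G}

lemma AReach.not_mem_left {W : Finset V} {x y : V} (h : AReach G W x y) : x ∉ W := by
  obtain ⟨w, hw⟩ := h
  exact hw x w.start_mem_support

lemma AReach.not_mem_right {W : Finset V} {x y : V} (h : AReach G W x y) : y ∉ W := by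
  obtain ⟨w, hw⟩ := h
  exact hw y w.end_mem_support

lemma AReach.refl {W : Finset V} {x : V} (hx : x ∉ W) : AReach G W x x :=
  ⟨Walk.nil, by simp [hx]⟩

lemma AReach.symm {W : Finset V} {x y : V} (h : AReach G W x y) : AReach G W y x := by
  obtain ⟨w, hw⟩ := h
  exact ⟨w.reverse, by simpa using hw⟩

lemma AReach.trans {W : Finset V} {x y z : V} (h : AReach G W x y) (h' : AReach G W y z) :
    AReach G W x z := by
  obtain ⟨w, hw⟩ := h
  obtain ⟨w', hw'⟩ := h'
  refine ⟨w.append w', ?_⟩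
  intro v hv
  rcases (Walk.mem_support_append_iff _ _).1 hv with h | h
  · exact hw v h
  · exact hw' v h

lemma AReach.adj {W : Finset V} {x y z : V} (h : AReach G W x y) (ha : G.Adj y z)
    (hz : z ∉ W) : AReach G W x z := by
  refine h.trans ⟨ha.toWalk, ?_⟩
  intro v hv
  simp only [Walk.support_cons, Walk.support_nil, List.mem_cons, List.not_mem_nil,
    or_false] at hv
  rcases hv with rfl | rfl
  · exact h.not_mem_right
  · exact hz

lemma AReach.mono {W W' : Finset V} (hWW : W' ⊆ W) {x y : V} (h : AReach G W x y) :
    AReach G W' x y := by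
  obtain ⟨w, hw⟩ := h
  exact ⟨w, fun v hv hvW => hw v hv (hWW hvW)⟩

variable (G)

/-- The component of `x` in `G - W`. -/
def comp (W : Finset V) (x : V) : Set V := {y | AReach G W x y}

variable {G}

lemma mem_comp_self {W : Finset V} {x : V} (hx : x ∉ W) : x ∈ comp G W x := AReach.refl hx

lemma comp_eq_of_mem {W : Finset V} {x y : V} (h : y ∈ comp G W x) :
    comp G W y = comp G W x := by
  ext z
  constructor
  · exact fun hz => AReach.trans h hz
  · exact fun hz => AReach.trans (AReach.symm h) hz

lemma not_mem_of_mem_comp {W : Finset V} {x y : V} (h : y ∈ comp G W x) : y ∉ W :=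
  AReach.not_mem_right h

/-- Walk in induced graph from a walk avoiding W. -/
lemma areach_iff_reachable {W : Finset V} {x y : V} (hx : x ∉ W) (hy : y ∉ W) :
    AReach G W x y ↔ (G.induce ((W : Set V)ᶜ)).Reachable ⟨x, hx⟩ ⟨y, hy⟩ := by
  constructor
  · rintro ⟨w, hw⟩
    induction w with
    | nil => rfl
    | @cons a b c hab p ih =>
      have hb : b ∉ W := hw b (by simp)
      have h1 : (G.induce ((W : Set V)ᶜ)).Adj ⟨a, hx⟩ ⟨b, hb⟩ := by
        simp only [comap_adj, Function.Embedding.coe_subtype]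
        exact hab
      exact (Adj.reachable h1).trans
        (ih hb hy (fun v hv => hw v (by simp [hv])))
  · intro h
    obtain ⟨p⟩ := h
    refine ⟨p.map (Embedding.induce ((W : Set V)ᶜ)).toHom, ?_⟩
    intro v hv
    have hv2 : v ∈ (p.map (Embedding.induce ((W : Set V)ᶜ)).toHom).support := hv
    rw [Walk.support_map, List.mem_map] at hv2
    obtain ⟨⟨u, hu⟩, _, rfl⟩ := hv2
    exact hu

lemma supp_eq_comp {W : Finset V} {x : V} (hx : x ∉ W) :
    (G.componentComplMk (show x ∉ (W : Set V) by exact_mod_cast hx)).supp = comp G W x := by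
  ext v
  simp only [ComponentCompl.supp, Set.mem_setOf_eq, comp]
  constructor
  · rintro ⟨hv, h⟩
    have hv' : v ∉ W := by exact_mod_cast hv
    rw [ConnectedComponent.eq] at h
    exact ((areach_iff_reachable hv' hx).2 h).symm
  · intro h
    have hv' : v ∉ W := not_mem_of_mem_comp h
    refine ⟨by exact_mod_cast hv', ?_⟩
    rw [ConnectedComponent.eq]
    exact (areach_iff_reachable hv' hx).1 (AReach.symm h)

/-- From one-endedness: an infinite component exists and is unique. -/
lemma one_end_comp (hone : OneEnded G) (K : Finset V) :
    ∃ x, x ∉ K ∧ (comp G K x).Infinite ∧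
      ∀ y, y ∉ K → (comp G K y).Infinite → AReach G K x y := by
  obtain ⟨C, hC, huniq⟩ := hone K
  obtain ⟨x, hx, hmk⟩ := C.exists_eq_mk
  have hx' : x ∉ K := by exact_mod_cast hx
  refine ⟨x, hx', ?_, ?_⟩
  · have h0 := supp_eq_comp (G := G) hx'
    have : G.componentComplMk (show x ∉ (K : Set V) by exact_mod_cast hx') = C := hmk
    rw [this] at h0
    rw [← h0]; exact hC
  · intro y hy hyinf
    have hy' : y ∉ (K : Set V) := by exact_mod_cast hy
    have h2 : (G.componentComplMk hy').supp.Infinite := by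
      rw [supp_eq_comp hy]; exact hyinf
    have h3 : G.componentComplMk hy' = C := huniq _ h2
    rw [← hmk] at h3
    have h4 := ConnectedComponent.eq.1 h3
    exact ((areach_iff_reachable hy hx').2 h4).symm

lemma infinite_V (hone : OneEnded G) : (Set.univ : Set V).Infinite := by
  obtain ⟨x, hx, hinf, -⟩ := one_end_comp hone (∅ : Finset V)
  exact hinf.mono (Set.subset_univ _)

lemma walk_closed {W : Finset V} {P : Set V}
    (hP : ∀ p ∈ P, ∀ q, G.Adj p q → q ∉ W → q ∈ P) :
    ∀ {x y : V} (w : G.Walk x y), (∀ v ∈ w.support, v ∉ W) → x ∈ P → y ∈ P := by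
  intro x y w
  induction w with
  | nil => exact fun _ h => h
  | @cons a b c hab p ih =>
    intro hw ha
    have hb : b ∉ W := hw b (by simp)
    exact ih (fun v hv => hw v (by simp [hv])) (hP a ha b hab hb)

lemma comp_subset_closed {W : Finset V} {P : Set V} {x : V} (hx : x ∈ P)
    (hP : ∀ p ∈ P, ∀ q, G.Adj p q → q ∉ W → q ∈ P) : comp G W x ⊆ P := by
  rintro y ⟨w, hw⟩
  exact walk_closed hP w hw hx

def IsCut (G : SimpleGraph V) (W : Finset V) : Prop :=
  ∃ x y, x ∉ W ∧ y ∉ W ∧ ¬ AReach G W x y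

lemma not_areach_of_closed {W : Finset V} {P : Set V} {x y : V} (hx : x ∈ P)
    (hP : ∀ p ∈ P, ∀ q, G.Adj p q → q ∉ W → q ∈ P) (hy : y ∉ P) : ¬ AReach G W x y :=
  fun h => hy (comp_subset_closed hx hP h)

lemma isCut_of_closed {W : Finset V} {P : Set V} {x y : V} (hx : x ∈ P) (hxW : x ∉ W)
    (hP : ∀ p ∈ P, ∀ q, G.Adj p q → q ∉ W → q ∈ P) (hy : y ∉ P) (hyW : y ∉ W) :
    IsCut G W :=
  ⟨x, y, hxW, hyW, not_areach_of_closed hx hP hy⟩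

lemma no_finite_closed (hconn : G.Connected) (hinf : (Set.univ : Set V).Infinite)
    {U : Finset V} (hne : U.Nonempty) (hcl : ∀ u ∈ U, ∀ q, G.Adj u q → q ∈ U) : False := by
  obtain ⟨u₀, hu₀⟩ := hne
  have : ∀ v : V, v ∈ (U : Set V) := by
    intro v
    obtain ⟨w⟩ := hconn.preconnected u₀ v
    exact walk_closed (W := ∅) (P := (U : Set V))
      (fun p hp q hq _ => hcl p hp q hq) w (by simp) hu₀
  exact (hinf.mono (fun v _ => this v)) (U.finite_toSet)

section NB
variable [DecidableEq V] [G.LocallyFinite]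

def NB (G : SimpleGraph V) [DecidableEq V] [G.LocallyFinite] (A : Finset V) : Finset V :=
  A.biUnion (fun a => G.neighborFinset a) \ A

lemma mem_NB_iff {A : Finset V} {t : V} :
    t ∈ NB G A ↔ t ∉ A ∧ ∃ a ∈ A, G.Adj a t := by
  simp only [NB, Finset.mem_sdiff, Finset.mem_biUnion, mem_neighborFinset]
  tauto

lemma adj_mem_or_NB {A : Finset V} {a q : V} (ha : a ∈ A) (haq : G.Adj a q) :
    q ∈ A ∨ q ∈ NB G A := by
  by_cases h : q ∈ A
  · exact Or.inl h
  · exact Or.inr (mem_NB_iff.2 ⟨h, a, ha, haq⟩)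

lemma NB_disjoint {A : Finset V} : ∀ t ∈ NB G A, t ∉ A := fun _ ht => (mem_NB_iff.1 ht).1

lemma NB_adj {A : Finset V} {t : V} (ht : t ∈ NB G A) : ∃ a ∈ A, G.Adj a t :=
  (mem_NB_iff.1 ht).2

end NB

section Transport
variable [DecidableEq V]

lemma areach_image (α : G ≃g G) {W : Finset V} {x y : V} (h : AReach G W x y) :
    AReach G (W.image α) (α x) (α y) := by
  obtain ⟨w, hw⟩ := h
  refine ⟨w.map α.toHom, ?_⟩
  intro v hv
  rw [Walk.support_map, List.mem_map] at hv
  obtain ⟨u, hu, rfl⟩ := hv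
  intro hmem
  obtain ⟨u', hu', he⟩ := Finset.mem_image.1 hmem
  exact hw u hu (by rwa [α.injective he] at hu')

lemma image_image_symm (α : G ≃g G) (W : Finset V) : (W.image α).image α.symm = W := by
  ext v
  simp only [Finset.mem_image]
  constructor
  · rintro ⟨u, ⟨w, hw, rfl⟩, rfl⟩
    simpa using hw
  · intro hv
    exact ⟨α v, ⟨v, hv, rfl⟩, by simp⟩

lemma areach_image_iff (α : G ≃g G) {W : Finset V} {x y : V} :
    AReach G (W.image α) (α x) (α y) ↔ AReach G W x y := by
  refine ⟨fun h => ?_, areach_image α⟩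
  have := areach_image α.symm h
  rwa [image_image_symm, α.symm_apply_apply, α.symm_apply_apply] at this

lemma comp_image (α : G ≃g G) (W : Finset V) (x : V) :
    comp G (W.image α) (α x) = α '' comp G W x := by
  ext v
  constructor
  · intro hv
    refine ⟨α.symm v, ?_, by simp⟩
    have : v = α (α.symm v) := by simp
    rw [this] at hv
    exact (areach_image_iff α).1 hv
  · rintro ⟨u, hu, rfl⟩
    exact areach_image α hu

lemma isCut_image (α : G ≃g G) {W : Finset V} (h : IsCut G W) : IsCut G (W.image α) := by
  obtain ⟨x, y, hx, hy, hr⟩ := h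
  refine ⟨α x, α y, ?_, ?_, fun hc => hr ((areach_image_iff α).1 hc)⟩
  · intro hc; obtain ⟨u, hu, he⟩ := Finset.mem_image.1 hc; exact hx (by rwa [α.injective he] at hu)
  · intro hc; obtain ⟨u, hu, he⟩ := Finset.mem_image.1 hc; exact hy (by rwa [α.injective he] at hu)

variable [G.LocallyFinite]

lemma NB_image (α : G ≃g G) (A : Finset V) : NB G (A.image α) = (NB G A).image α := by
  ext t
  constructor
  · intro ht
    obtain ⟨htA, a, ha, hadj⟩ := mem_NB_iff.1 ht
    obtain ⟨a', ha', rfl⟩ := Finset.mem_image.1 ha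
    refine Finset.mem_image.2 ⟨α.symm t, mem_NB_iff.2 ⟨?_, a', ha', ?_⟩, by simp⟩
    · intro hc; exact htA (Finset.mem_image.2 ⟨α.symm t, hc, by simp⟩)
    · have h2 : G.Adj (α a') (α (α.symm t)) := by simpa using hadj
      exact α.map_rel_iff.1 h2
  · intro ht
    obtain ⟨t', ht', rfl⟩ := Finset.mem_image.1 ht
    obtain ⟨ht'A, a, ha, hadj⟩ := mem_NB_iff.1 ht'
    refine mem_NB_iff.2 ⟨?_, α a, Finset.mem_image.2 ⟨a, ha, rfl⟩, α.map_rel_iff.2 hadj⟩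
    intro hc
    obtain ⟨u, hu, he⟩ := Finset.mem_image.1 hc
    exact ht'A (by rwa [α.injective he] at hu)

end Transport

section Fragments
variable [DecidableEq V] [G.LocallyFinite]

/-- A fragment : finite component of a minimum cut. -/
def Fragment (G : SimpleGraph V) (κ : ℕ) (W A : Finset V) : Prop :=
  IsCut G W ∧ W.card = κ ∧ ∃ x, x ∉ W ∧ (A : Set V) = comp G W x

lemma Fragment.nonempty {κ : ℕ} {W A : Finset V} (h : Fragment G κ W A) : A.Nonempty := by
  obtain ⟨-, -, x, hx, hA⟩ := h
  have : x ∈ (A : Set V) := by rw [hA]; exact mem_comp_self hx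
  exact ⟨x, by exact_mod_cast this⟩

lemma Fragment.disj_cut {κ : ℕ} {W A : Finset V} (h : Fragment G κ W A) :
    ∀ a ∈ A, a ∉ W := by
  obtain ⟨-, -, x, hx, hA⟩ := h
  intro a ha
  have : a ∈ comp G W x := by rw [← hA]; exact_mod_cast ha
  exact not_mem_of_mem_comp this

lemma fragment_image (α : G ≃g G) {κ : ℕ} {W A : Finset V} (h : Fragment G κ W A) :
    Fragment G κ (W.image α) (A.image α) := by
  obtain ⟨hcut, hcard, x, hx, hA⟩ := h
  refine ⟨isCut_image α hcut, by rw [Finset.card_image_of_injective _ α.injective]; exact hcard,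
    α x, ?_, ?_⟩
  · intro hc; obtain ⟨u, hu, he⟩ := Finset.mem_image.1 hc; exact hx (by rwa [α.injective he] at hu)
  · rw [comp_image, ← hA]
    ext v
    simp only [Finset.coe_image, Set.mem_image]

/-- Canonical cut of a fragment. -/
lemma frag_canon (hinf : (Set.univ : Set V).Infinite)
    (hκmin : ∀ W', IsCut G W' → κ ≤ W'.card)
    {W A : Finset V} (h : Fragment G κ W A) :
    Fragment G κ (NB G A) A ∧ NB G A ⊆ W := by
  obtain ⟨hcut, hcard, x, hxW, hA⟩ := h
  have hNBW : NB G A ⊆ W := by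
    intro t ht
    obtain ⟨htA, a, haA, hadj⟩ := mem_NB_iff.1 ht
    by_contra htW
    have haC : a ∈ comp G W x := by rw [← hA]; exact_mod_cast haA
    have : t ∈ comp G W x := AReach.adj haC hadj htW
    rw [← hA] at this
    exact htA (by exact_mod_cast this)
  have hxA : x ∈ (A : Set V) := by rw [hA]; exact mem_comp_self hxW
  have hxA' : x ∈ A := by exact_mod_cast hxA
  have hxNB : x ∉ NB G A := fun hc => (NB_disjoint _ hc) hxA'
  have hclosed : ∀ p ∈ (A : Set V), ∀ q, G.Adj p q → q ∉ NB G A → q ∈ (A : Set V) := by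
    intro p hp q hadj hq
    rcases adj_mem_or_NB (by exact_mod_cast hp) hadj with h1 | h1
    · exact_mod_cast h1
    · exact absurd h1 hq
  have hcompeq : (A : Set V) = comp G (NB G A) x := by
    apply Set.Subset.antisymm
    · rw [hA]; intro v hv; exact AReach.mono hNBW hv
    · exact comp_subset_closed hxA hclosed
  haveI : Infinite V := Set.infinite_univ_iff.1 hinf
  obtain ⟨y, hy⟩ := Infinite.exists_notMem_finset (A ∪ NB G A)
  have hyA : y ∉ (A : Set V) := by
    intro hc; exact hy (Finset.mem_union_left _ (by exact_mod_cast hc))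
  have hyNB : y ∉ NB G A := fun hc => hy (Finset.mem_union_right _ hc)
  have hcut' : IsCut G (NB G A) := isCut_of_closed hxA hxNB hclosed hyA hyNB
  have hcard' : (NB G A).card = κ :=
    le_antisymm (hcard ▸ Finset.card_le_card hNBW) (hκmin _ hcut')
  exact ⟨⟨hcut', hcard', x, hxNB, hcompeq⟩, hNBW⟩

/-- Any minimum cut has a finite component. -/
lemma exists_fragment (hone : OneEnded G)
    {W : Finset V} (hWcut : IsCut G W) (hWcard : W.card = κ) :
    ∃ A : Finset V, Fragment G κ W A := by
  obtain ⟨x, y, hx, hy, hr⟩ := id hWcut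
  obtain ⟨z, hz, hzinf, hzuniq⟩ := one_end_comp hone W
  have : (comp G W x).Finite ∨ (comp G W y).Finite := by
    by_contra hc
    push_neg at hc
    obtain ⟨h1, h2⟩ := hc
    exact hr (AReach.trans (AReach.symm (hzuniq x hx h1)) (hzuniq y hy h2))
  rcases this with hf | hf
  · exact ⟨hf.toFinset, hWcut, hWcard, x, hx, by simp⟩
  · exact ⟨hf.toFinset, hWcut, hWcard, y, hy, by simp⟩

/-- degree bound: d + 1 ≤ |A| + |N(A)| for a vertex in A. -/
lemma deg_bound {d : ℕ} (hd : ∀ v : V, G.degree v = d)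
    {A : Finset V} {a : V} (ha : a ∈ A) :
    d + 1 ≤ A.card + (NB G A).card := by
  have hsub : G.neighborFinset a ⊆ A.erase a ∪ NB G A := by
    intro q hq
    rw [mem_neighborFinset] at hq
    rcases adj_mem_or_NB ha hq with h1 | h1
    · exact Finset.mem_union_left _ (Finset.mem_erase.2 ⟨hq.ne', h1⟩)
    · exact Finset.mem_union_right _ h1
  have h1 : d ≤ (A.erase a ∪ NB G A).card := by
    rw [← hd a, ← card_neighborFinset_eq_degree]
    exact Finset.card_le_card hsub
  have h2 : (A.erase a ∪ NB G A).card ≤ (A.card - 1) + (NB G A).card :=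
    le_trans (Finset.card_union_le _ _) (by rw [Finset.card_erase_of_mem ha])
  have h3 : 1 ≤ A.card := Finset.card_pos.2 ⟨a, ha⟩
  omega

end Fragments

section Atoms
variable [DecidableEq V] [G.LocallyFinite]

/-- split a finite set by two disjoint finite sets. -/
lemma card_split (S A' S' : Finset V) (hdisj : ∀ a ∈ A', a ∉ S') :
    S.card = (S ∩ A').card + (S ∩ S').card + (S \ (A' ∪ S')).card := by
  have h1 : Disjoint (S ∩ A') (S ∩ S') := by
    rw [Finset.disjoint_left]
    intro a ha ha'
    exact hdisj a (Finset.mem_inter.1 ha).2 (Finset.mem_inter.1 ha').2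
  have h2 : Disjoint ((S ∩ A') ∪ (S ∩ S')) (S \ (A' ∪ S')) := by
    rw [Finset.disjoint_left]
    intro a ha ha'
    rw [Finset.mem_sdiff, Finset.mem_union] at ha'
    rcases Finset.mem_union.1 ha with h | h
    · exact ha'.2 (Or.inl (Finset.mem_inter.1 h).2)
    · exact ha'.2 (Or.inr (Finset.mem_inter.1 h).2)
  have h3 : S = ((S ∩ A') ∪ (S ∩ S')) ∪ (S \ (A' ∪ S')) := by
    ext a
    simp only [Finset.mem_union, Finset.mem_inter, Finset.mem_sdiff]
    constructor
    · intro ha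
      by_cases h : a ∈ A' ∨ a ∈ S'
      · rcases h with h | h
        · exact Or.inl (Or.inl ⟨ha, h⟩)
        · exact Or.inl (Or.inr ⟨ha, h⟩)
      · exact Or.inr ⟨ha, by tauto⟩
    · rintro ((⟨h, -⟩ | ⟨h, -⟩) | ⟨h, -⟩) <;> exact h
  conv_lhs => rw [h3]
  rw [Finset.card_union_of_disjoint h2, Finset.card_union_of_disjoint h1]

/-- An atom: a minimum-size fragment presented with its canonical cut. -/
def IsAtom (G : SimpleGraph V) [DecidableEq V] [G.LocallyFinite] (κ μ : ℕ) (A : Finset V) :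
    Prop :=
  Fragment G κ (NB G A) A ∧ A.card = μ

variable {κ μ : ℕ}

lemma IsAtom.card_cut {A : Finset V} (h : IsAtom G κ μ A) : (NB G A).card = κ := h.1.2.1

lemma IsAtom.not_mem_cut {A : Finset V} (_ : IsAtom G κ μ A) :
    ∀ a ∈ A, a ∉ NB G A := fun a ha hc => (NB_disjoint a hc) ha

lemma adj_out (hG : G.Adj p q) {A : Finset V} (hp : p ∉ A) (hpNB : p ∉ NB G A) : q ∉ A :=
  fun hq => by rcases adj_mem_or_NB hq hG.symm with h | h; exacts [hp h, hpNB h]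

lemma exists_deep_point (hone : OneEnded G) {W W' A A' : Finset V}
    (hfr : Fragment G κ W A) (hfr' : Fragment G κ W' A') :
    ∃ e, e ∉ W ∧ e ∉ W' ∧ e ∉ A ∧ e ∉ A' ∧ (comp G (W ∪ W') e).Infinite := by
  obtain ⟨e, he, heinf, -⟩ := one_end_comp hone (W ∪ W')
  have heW : e ∉ W := fun hc => he (Finset.mem_union_left _ hc)
  have heW' : e ∉ W' := fun hc => he (Finset.mem_union_right _ hc)
  refine ⟨e, heW, heW', ?_, ?_, heinf⟩
  · intro hc
    obtain ⟨-, -, x, hx, hA⟩ := hfr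
    have h1 : e ∈ comp G W x := by rw [← hA]; exact_mod_cast hc
    have h2 : comp G (W ∪ W') e ⊆ comp G W e :=
      fun v hv => AReach.mono (Finset.subset_union_left) hv
    have h3 : comp G W e = comp G W x := comp_eq_of_mem h1
    have h4 : comp G (W ∪ W') e ⊆ (A : Set V) := by rw [hA, ← h3]; exact h2
    exact heinf (Set.Finite.subset (A.finite_toSet) h4)
  · intro hc
    obtain ⟨-, -, x, hx, hA⟩ := hfr'
    have h1 : e ∈ comp G W' x := by rw [← hA]; exact_mod_cast hc
    have h2 : comp G (W ∪ W') e ⊆ comp G W' e :=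
      fun v hv => AReach.mono (Finset.subset_union_right) hv
    have h3 : comp G W' e = comp G W' x := comp_eq_of_mem h1
    have : comp G (W ∪ W') e ⊆ (A' : Set V) := by rw [hA, ← h3]; exact h2
    exact heinf (Set.Finite.subset (A'.finite_toSet) this)

end Atoms

section Crossing
variable [DecidableEq V] [G.LocallyFinite] {κ μ : ℕ}

lemma atom_eq_of_meet (hone : OneEnded G)
    (hκmin : ∀ W', IsCut G W' → κ ≤ W'.card)
    (hμmin : ∀ W B : Finset V, Fragment G κ W B → μ ≤ B.card)
    {A A' : Finset V} (hA : IsAtom G κ μ A) (hA' : IsAtom G κ μ A')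
    {p₀ : V} (hp₀ : p₀ ∈ A) (hp₀' : p₀ ∈ A') : A = A' := by
  set S := NB G A with hS
  set S' := NB G A' with hS'
  have hfr := hA.1
  have hfr' := hA'.1
  have hAS : ∀ a ∈ A, a ∉ S := fun a ha hc => NB_disjoint a hc ha
  have hAS' : ∀ a ∈ A', a ∉ S' := fun a ha hc => NB_disjoint a hc ha
  obtain ⟨e, heS, heS', heA, heA', heinf⟩ := exists_deep_point hone hfr hfr'
  -- cut 1 around A ∩ A'
  set Wc : Finset V := (A ∩ S') ∪ (S ∩ S') ∪ (S ∩ A') with hWc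
  set P : Set V := (↑A : Set V) ∩ (↑A' : Set V) with hP
  have hclosP : ∀ p ∈ P, ∀ q, G.Adj p q → q ∉ Wc → q ∈ P := by
    rintro p ⟨hpA, hpA'⟩ q hadj hq
    have h1 := adj_mem_or_NB (by exact_mod_cast hpA) hadj
    have h2 := adj_mem_or_NB (by exact_mod_cast hpA') hadj
    rw [← hS] at h1; rw [← hS'] at h2
    rcases h1 with h1 | h1 <;> rcases h2 with h2 | h2
    · exact ⟨by exact_mod_cast h1, by exact_mod_cast h2⟩
    · exact absurd (Finset.mem_union_left _ (Finset.mem_union_left _ (Finset.mem_inter.2 ⟨h1, h2⟩))) hq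
    · exact absurd (Finset.mem_union_right _ (Finset.mem_inter.2 ⟨h1, h2⟩)) hq
    · exact absurd (Finset.mem_union_left _ (Finset.mem_union_right _ (Finset.mem_inter.2 ⟨h1, h2⟩))) hq
  have hp₀P : p₀ ∈ P := ⟨by exact_mod_cast hp₀, by exact_mod_cast hp₀'⟩
  have hp₀Wc : p₀ ∉ Wc := by
    intro hc
    rcases Finset.mem_union.1 hc with hc | hc
    · rcases Finset.mem_union.1 hc with hc | hc
      · exact hAS' p₀ hp₀' (Finset.mem_inter.1 hc).2
      · exact hAS p₀ hp₀ (Finset.mem_inter.1 hc).1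
    · exact hAS p₀ hp₀ (Finset.mem_inter.1 hc).1
  have heP : e ∉ P := fun hc => heA (by exact_mod_cast hc.1)
  have heWc : e ∉ Wc := by
    intro hc
    rcases Finset.mem_union.1 hc with hc | hc
    · rcases Finset.mem_union.1 hc with hc | hc
      · exact heS' (Finset.mem_inter.1 hc).2
      · exact heS (Finset.mem_inter.1 hc).1
    · exact heS (Finset.mem_inter.1 hc).1
  have hcut1 : IsCut G Wc := isCut_of_closed hp₀P hp₀Wc hclosP heP heWc
  have hk1 : κ ≤ Wc.card := hκmin _ hcut1
  -- cut 2 around B ∩ B'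
  set Wd : Finset V := (S' \ (A ∪ S)) ∪ (S ∩ S') ∪ (S \ (A' ∪ S')) with hWd
  set P2 : Set V := {v | (v ∉ A ∧ v ∉ S) ∧ (v ∉ A' ∧ v ∉ S')} with hP2
  have hclosP2 : ∀ p ∈ P2, ∀ q, G.Adj p q → q ∉ Wd → q ∈ P2 := by
    rintro p ⟨⟨hpA, hpS⟩, hpA', hpS'⟩ q hadj hq
    have hqA : q ∉ A := adj_out hadj hpA hpS
    have hqA' : q ∉ A' := adj_out hadj hpA' hpS'
    have hqS : q ∉ S := by
      intro hqS
      by_cases h : q ∈ S'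
      · exact hq (Finset.mem_union_left _ (Finset.mem_union_right _ (Finset.mem_inter.2 ⟨hqS, h⟩)))
      · exact hq (Finset.mem_union_right _ (Finset.mem_sdiff.2 ⟨hqS, by
          rw [Finset.mem_union]; tauto⟩))
    have hqS' : q ∉ S' := by
      intro hqS'
      exact hq (Finset.mem_union_left _ (Finset.mem_union_left _ (Finset.mem_sdiff.2 ⟨hqS', by
        rw [Finset.mem_union]; tauto⟩)))
    exact ⟨⟨hqA, hqS⟩, hqA', hqS'⟩
  have heP2 : e ∈ P2 := ⟨⟨heA, heS⟩, heA', heS'⟩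
  have heWd : e ∉ Wd := by
    intro hc
    rcases Finset.mem_union.1 hc with hc | hc
    · rcases Finset.mem_union.1 hc with hc | hc
      · exact heS' (Finset.mem_sdiff.1 hc).1
      · exact heS (Finset.mem_inter.1 hc).1
    · exact heS (Finset.mem_sdiff.1 hc).1
  have hp₀P2 : p₀ ∉ P2 := fun hc => hc.1.1 hp₀
  have hp₀Wd : p₀ ∉ Wd := by
    intro hc
    rcases Finset.mem_union.1 hc with hc | hc
    · rcases Finset.mem_union.1 hc with hc | hc
      · exact (Finset.mem_sdiff.1 hc).2 (Finset.mem_union_left _ hp₀)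
      · exact hAS p₀ hp₀ (Finset.mem_inter.1 hc).1
    · exact hAS p₀ hp₀ (Finset.mem_sdiff.1 hc).1
  have hcut2 : IsCut G Wd := isCut_of_closed heP2 heWd hclosP2 hp₀P2 hp₀Wd
  have hk2 : κ ≤ Wd.card := hκmin _ hcut2
  -- arithmetic
  have hrowS : S.card = (S ∩ A').card + (S ∩ S').card + (S \ (A' ∪ S')).card :=
    card_split S A' S' hAS'
  have hrowS' : S'.card = (S' ∩ A).card + (S' ∩ S).card + (S' \ (A ∪ S)).card :=
    card_split S' A S hAS
  have hScard : S.card = κ := hA.card_cut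
  have hS'card : S'.card = κ := hA'.card_cut
  have hWdle : Wd.card ≤ (S' \ (A ∪ S)).card + (S ∩ S').card + (S \ (A' ∪ S')).card :=
    le_trans (Finset.card_union_le _ _) (by
      have := Finset.card_union_le (S' \ (A ∪ S)) (S ∩ S')
      omega)
  have hWcle : Wc.card ≤ (A ∩ S').card + (S ∩ S').card + (S ∩ A').card := by
    rw [hWc]
    have h1 := Finset.card_union_le (A ∩ S') (S ∩ S')
    have h2 := Finset.card_union_le ((A ∩ S') ∪ (S ∩ S')) (S ∩ A')
    omega
  have e1 : κ = (S ∩ A').card + (S ∩ S').card + (S \ (A' ∪ S')).card := by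
    rw [← hScard]; exact hrowS
  have e2 : κ = (A ∩ S').card + (S ∩ S').card + (S' \ (A ∪ S)).card := by
    rw [← hS'card, hrowS', Finset.inter_comm S' A, Finset.inter_comm S' S]
  have e3 : κ ≤ (S' \ (A ∪ S)).card + (S ∩ S').card + (S \ (A' ∪ S')).card :=
    le_trans hk2 hWdle
  have hWceq : Wc.card = κ := by omega
  -- the component of p₀ is a fragment inside A ∩ A'
  have hcomp : comp G Wc p₀ ⊆ P := comp_subset_closed hp₀P hclosP
  have hfin : (comp G Wc p₀).Finite :=
    Set.Finite.subset ((A ∩ A').finite_toSet) (by rw [Finset.coe_inter]; exact hcomp)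
  have hZfrag : Fragment G κ Wc hfin.toFinset := ⟨hcut1, hWceq, p₀, hp₀Wc, by simp⟩
  have hμZ : μ ≤ hfin.toFinset.card := hμmin _ _ hZfrag
  have hZsub : hfin.toFinset ⊆ A ∩ A' := by
    intro v hv
    rw [Set.Finite.mem_toFinset] at hv
    have := hcomp hv
    rw [Finset.mem_inter]
    exact ⟨by exact_mod_cast this.1, by exact_mod_cast this.2⟩
  have hAA' : μ ≤ (A ∩ A').card := le_trans hμZ (Finset.card_le_card hZsub)
  have h1 : A ∩ A' = A :=
    Finset.eq_of_subset_of_card_le (Finset.inter_subset_left) (by rw [hA.2]; exact hAA')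
  have h2 : A ∩ A' = A' :=
    Finset.eq_of_subset_of_card_le (Finset.inter_subset_right) (by rw [hA'.2]; exact hAA')
  rw [← h1, h2]

lemma atom_subset_cut (hone : OneEnded G)
    (hκmin : ∀ W', IsCut G W' → κ ≤ W'.card)
    (hμmin : ∀ W B : Finset V, Fragment G κ W B → μ ≤ B.card)
    {X A'' : Finset V} (hX : IsAtom G κ μ X) (hA'' : IsAtom G κ μ A'')
    {t : V} (ht : t ∈ A'') (htT : t ∈ NB G X) : A'' ⊆ NB G X := by
  set T := NB G X with hT
  set S2 := NB G A'' with hS2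
  have hXA : ∀ v ∈ A'', v ∉ X := by
    intro v hv hvX
    have := atom_eq_of_meet hone hκmin hμmin hA'' hX hv hvX
    rw [this] at ht
    exact NB_disjoint t htT ht
  have hXT : ∀ v ∈ X, v ∉ T := fun v hv hc => NB_disjoint v hc hv
  have hA''S2 : ∀ v ∈ A'', v ∉ S2 := fun v hv hc => NB_disjoint v hc hv
  by_contra hsub
  obtain ⟨b, hb, hbT⟩ := by
    rw [Finset.subset_iff] at hsub; push_neg at hsub; exact hsub
  have hbX : b ∉ X := hXA b hb
  obtain ⟨e, heT, heS2, heX, heA'', heinf⟩ := exists_deep_point hone hX.1 hA''.1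
  -- cut Z around A'' ∩ B(X)
  set Z : Finset V := (T ∩ S2) ∪ (T ∩ A'') ∪ (S2 \ (X ∪ T)) with hZ
  set P : Set V := {v | v ∈ A'' ∧ v ∉ X ∧ v ∉ T} with hP
  have hclosP : ∀ p ∈ P, ∀ q, G.Adj p q → q ∉ Z → q ∈ P := by
    rintro p ⟨hpA, hpX, hpT⟩ q hadj hq
    have h1 := adj_mem_or_NB hpA hadj
    rw [← hS2] at h1
    have hqX : q ∉ X := adj_out hadj hpX hpT
    rcases h1 with h1 | h1
    · have hqT : q ∉ T := fun hc =>
        hq (Finset.mem_union_left _ (Finset.mem_union_right _ (Finset.mem_inter.2 ⟨hc, h1⟩)))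
      exact ⟨h1, hqX, hqT⟩
    · by_cases h2 : q ∈ T
      · exact absurd (Finset.mem_union_left _ (Finset.mem_union_left _
          (Finset.mem_inter.2 ⟨h2, h1⟩))) hq
      · exact absurd (Finset.mem_union_right _ (Finset.mem_sdiff.2 ⟨h1, by
          rw [Finset.mem_union]; tauto⟩)) hq
  have hbP : b ∈ P := ⟨hb, hbX, hbT⟩
  have hbZ : b ∉ Z := by
    intro hc
    rcases Finset.mem_union.1 hc with hc | hc
    · rcases Finset.mem_union.1 hc with hc | hc
      · exact hbT (Finset.mem_inter.1 hc).1
      · exact hbT (Finset.mem_inter.1 hc).1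
    · exact hA''S2 b hb (Finset.mem_sdiff.1 hc).1
  have heP : e ∉ P := fun hc => heA'' hc.1
  have heZ : e ∉ Z := by
    intro hc
    rcases Finset.mem_union.1 hc with hc | hc
    · rcases Finset.mem_union.1 hc with hc | hc
      · exact heT (Finset.mem_inter.1 hc).1
      · exact heT (Finset.mem_inter.1 hc).1
    · exact heS2 (Finset.mem_sdiff.1 hc).1
  have hcutZ : IsCut G Z := isCut_of_closed hbP hbZ hclosP heP heZ
  have hkZ : κ ≤ Z.card := hκmin _ hcutZ
  have hZle : Z.card ≤ (T ∩ S2).card + (T ∩ A'').card + (S2 \ (X ∪ T)).card := by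
    rw [hZ]
    have h1 := Finset.card_union_le (T ∩ S2) (T ∩ A'')
    have h2 := Finset.card_union_le ((T ∩ S2) ∪ (T ∩ A'')) (S2 \ (X ∪ T))
    omega
  have hcolS2 : κ = (S2 ∩ X).card + (T ∩ S2).card + (S2 \ (X ∪ T)).card := by
    have h0 : S2.card = (S2 ∩ X).card + (S2 ∩ T).card + (S2 \ (X ∪ T)).card :=
      card_split S2 X T hXT
    rw [← hA''.card_cut, ← hS2, h0, Finset.inter_comm S2 T]
  by_cases hXB : ∃ c, c ∈ X ∧ c ∉ A'' ∧ c ∉ S2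
  · obtain ⟨c, hcX, hcA, hcS2⟩ := hXB
    -- cut Y around X ∩ B(A'')
    set Y : Finset V := (X ∩ S2) ∪ (T ∩ S2) ∪ (T \ (A'' ∪ S2)) with hY
    set P3 : Set V := {v | v ∈ X ∧ v ∉ A'' ∧ v ∉ S2} with hP3
    have hclosP3 : ∀ p ∈ P3, ∀ q, G.Adj p q → q ∉ Y → q ∈ P3 := by
      rintro p ⟨hpX, hpA, hpS2⟩ q hadj hq
      have h1 := adj_mem_or_NB hpX hadj
      rw [← hT] at h1
      have hqA : q ∉ A'' := adj_out hadj hpA hpS2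
      rcases h1 with h1 | h1
      · have hqS2 : q ∉ S2 := fun hc =>
          hq (Finset.mem_union_left _ (Finset.mem_union_left _ (Finset.mem_inter.2 ⟨h1, hc⟩)))
        exact ⟨h1, hqA, hqS2⟩
      · by_cases h2 : q ∈ S2
        · exact absurd (Finset.mem_union_left _ (Finset.mem_union_right _
            (Finset.mem_inter.2 ⟨h1, h2⟩))) hq
        · exact absurd (Finset.mem_union_right _ (Finset.mem_sdiff.2 ⟨h1, by
            rw [Finset.mem_union]; tauto⟩)) hq
    have hcP3 : c ∈ P3 := ⟨hcX, hcA, hcS2⟩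
    have hcY : c ∉ Y := by
      intro hc
      rcases Finset.mem_union.1 hc with hc | hc
      · rcases Finset.mem_union.1 hc with hc | hc
        · exact hcS2 (Finset.mem_inter.1 hc).2
        · exact hXT c hcX (Finset.mem_inter.1 hc).1
      · exact hXT c hcX (Finset.mem_sdiff.1 hc).1
    have heP3 : e ∉ P3 := fun hc => heX hc.1
    have heY : e ∉ Y := by
      intro hc
      rcases Finset.mem_union.1 hc with hc | hc
      · rcases Finset.mem_union.1 hc with hc | hc
        · exact heS2 (Finset.mem_inter.1 hc).2
        · exact heT (Finset.mem_inter.1 hc).1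
      · exact heT (Finset.mem_sdiff.1 hc).1
    have hcutY : IsCut G Y := isCut_of_closed hcP3 hcY hclosP3 heP3 heY
    have hkY : κ ≤ Y.card := hκmin _ hcutY
    have hYle : Y.card ≤ (X ∩ S2).card + (T ∩ S2).card + (T \ (A'' ∪ S2)).card := by
      rw [hY]
      have h1 := Finset.card_union_le (X ∩ S2) (T ∩ S2)
      have h2 := Finset.card_union_le ((X ∩ S2) ∪ (T ∩ S2)) (T \ (A'' ∪ S2))
      omega
    have hrowT : κ = (T ∩ A'').card + (T ∩ S2).card + (T \ (A'' ∪ S2)).card := by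
      have h0 : T.card = (T ∩ A'').card + (T ∩ S2).card + (T \ (A'' ∪ S2)).card :=
        card_split T A'' S2 hA''S2
      rw [← hX.card_cut, ← hT, h0]
    have hcomm : (X ∩ S2).card = (S2 ∩ X).card := by rw [Finset.inter_comm]
    have hZeq : Z.card = κ := by omega
    -- fragment inside A'' \ T : contradiction with minimality
    have hcomp : comp G Z b ⊆ P := comp_subset_closed hbP hclosP
    have hPsub : P ⊆ ((A'' \ T : Finset V) : Set V) := by
      rintro v ⟨hv1, hv2, hv3⟩
      rw [Finset.coe_sdiff]
      exact ⟨by exact_mod_cast hv1, by exact_mod_cast hv3⟩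
    have hfin : (comp G Z b).Finite :=
      Set.Finite.subset ((A'' \ T).finite_toSet) (fun v hv => hPsub (hcomp hv))
    have hZfrag : Fragment G κ Z hfin.toFinset := ⟨hcutZ, hZeq, b, hbZ, by simp⟩
    have hμZ : μ ≤ hfin.toFinset.card := hμmin _ _ hZfrag
    have hsubZ : hfin.toFinset ⊆ A'' \ T := by
      intro v hv
      rw [Set.Finite.mem_toFinset] at hv
      exact_mod_cast hPsub (hcomp hv)
    have hlt : (A'' \ T).card < A''.card :=
      Finset.card_lt_card ⟨Finset.sdiff_subset, fun hc =>
        (Finset.mem_sdiff.1 (hc ht)).2 htT⟩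
    have := le_trans hμZ (Finset.card_le_card hsubZ)
    rw [hA''.2] at hlt
    omega
  · push_neg at hXB
    have hXS2 : X ⊆ S2 := by
      intro c hc
      by_cases h : c ∈ A''
      · exact absurd hc (hXA c h)
      · exact hXB c hc h
    have hSX : (S2 ∩ X) = X := by
      rw [Finset.inter_comm]; exact Finset.inter_eq_left.2 hXS2
    have hXcard : (S2 ∩ X).card = μ := by rw [hSX, hX.2]
    have hTA : μ ≤ (T ∩ A'').card := by omega
    have hTAsub : T ∩ A'' = A'' :=
      Finset.eq_of_subset_of_card_le (Finset.inter_subset_right) (by rw [hA''.2]; exact hTA)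
    exact hbT (Finset.mem_inter.1 (by rw [hTAsub]; exact hb)).1

end Crossing

section Structure0
variable [DecidableEq V] [G.LocallyFinite] {κ μ : ℕ}

lemma exists_atom_mem (htrans : ∀ u v : V, ∃ α : G ≃g G, α u = v)
    (hatom : ∃ A, IsAtom G κ μ A) (v : V) : ∃ A, IsAtom G κ μ A ∧ v ∈ A := by
  obtain ⟨A₀, hA₀⟩ := hatom
  obtain ⟨a₀, ha₀⟩ := hA₀.1.nonempty
  obtain ⟨α, hα⟩ := htrans a₀ v
  refine ⟨A₀.image α, ⟨?_, ?_⟩, ?_⟩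
  · rw [NB_image]
    exact fragment_image α hA₀.1
  · rw [Finset.card_image_of_injective _ α.injective]; exact hA₀.2
  · exact Finset.mem_image.2 ⟨a₀, ha₀, hα⟩

lemma mu_dvd_of_atomized (hone : OneEnded G)
    (hκmin : ∀ W', IsCut G W' → κ ≤ W'.card)
    (hμmin : ∀ W B : Finset V, Fragment G κ W B → μ ≤ B.card)
    (hμpos : 0 < μ) :
    ∀ n (T' : Finset V), T'.card = n →
      (∀ v ∈ T', ∃ A, IsAtom G κ μ A ∧ v ∈ A ∧ A ⊆ T') → μ ∣ T'.card := by
  intro n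
  induction n using Nat.strong_induction_on with
  | _ n ih =>
    intro T' hcard hin
    rcases Finset.eq_empty_or_nonempty T' with rfl | ⟨v, hv⟩
    · simp
    obtain ⟨A, hA, hvA, hAT⟩ := hin v hv
    have hAcard : A.card = μ := hA.2
    have hsub : A ⊆ T' := hAT
    have hTcard : (T' \ A).card = T'.card - μ := by
      rw [Finset.card_sdiff_of_subset hsub, hAcard]
    have hTlt : (T' \ A).card < n := by
      have : 0 < A.card := by rw [hAcard]; exact hμpos
      have := Finset.card_le_card hsub
      omega
    have hrec : μ ∣ (T' \ A).card := by
      refine ih _ hTlt (T' \ A) rfl ?_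
      intro w hw
      obtain ⟨A', hA', hwA', hA'T⟩ := hin w (Finset.mem_sdiff.1 hw).1
      refine ⟨A', hA', hwA', ?_⟩
      intro u hu
      rw [Finset.mem_sdiff]
      refine ⟨hA'T hu, fun huA => ?_⟩
      have : A' = A := atom_eq_of_meet hone hκmin hμmin hA' hA hu huA
      exact (Finset.mem_sdiff.1 hw).2 (this ▸ hwA')
    have : T'.card = (T' \ A).card + μ := by
      have := Finset.card_le_card hsub
      omega
    rw [this]
    exact Nat.dvd_add hrec dvd_rfl

lemma kappa_ne_mu (hconn : G.Connected) (hone : OneEnded G)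
    (htrans : ∀ u v : V, ∃ α : G ≃g G, α u = v)
    (hκmin : ∀ W', IsCut G W' → κ ≤ W'.card)
    (hμmin : ∀ W B : Finset V, Fragment G κ W B → μ ≤ B.card)
    (hatom : ∃ A, IsAtom G κ μ A) (hκpos : 0 < κ) : κ ≠ μ := by
  intro heq
  obtain ⟨X, hX⟩ := hatom
  set T := NB G X with hT
  have hTcard : T.card = κ := hX.card_cut
  obtain ⟨t, htT⟩ : T.Nonempty := Finset.card_pos.1 (by omega)
  obtain ⟨A₁, hA₁, htA₁⟩ := exists_atom_mem htrans ⟨X, hX⟩ t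
  have hA₁T : A₁ ⊆ T := atom_subset_cut hone hκmin hμmin hX hA₁ htA₁ htT
  have hA₁eq : A₁ = T := Finset.eq_of_subset_of_card_le hA₁T (by rw [hA₁.2, hTcard, heq])
  obtain ⟨a, haX, hadj⟩ := NB_adj htT
  have haA₁ : a ∉ A₁ := by
    rw [hA₁eq]
    exact fun hc => NB_disjoint a hc haX
  have haNB : a ∈ NB G A₁ := mem_NB_iff.2 ⟨haA₁, t, htA₁, hadj.symm⟩
  have hXNB : X ⊆ NB G A₁ := atom_subset_cut hone hκmin hμmin hA₁ hX haX haNB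
  have hXeq : X = NB G A₁ := Finset.eq_of_subset_of_card_le hXNB
    (by rw [hX.2, hA₁.card_cut, heq])
  have hclosed : ∀ u ∈ X ∪ A₁, ∀ q, G.Adj u q → q ∈ X ∪ A₁ := by
    intro u hu q hadjq
    rcases Finset.mem_union.1 hu with hu | hu
    · rcases adj_mem_or_NB hu hadjq with h | h
      · exact Finset.mem_union_left _ h
      · exact Finset.mem_union_right _ (hA₁eq ▸ h)
    · rcases adj_mem_or_NB hu hadjq with h | h
      · exact Finset.mem_union_right _ h
      · exact Finset.mem_union_left _ (hXeq ▸ h)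
  exact no_finite_closed hconn (infinite_V hone)
    ⟨t, Finset.mem_union_right _ htA₁⟩ hclosed

end Structure0

section Chains
variable [DecidableEq V] [G.LocallyFinite] {κ μ : ℕ}

lemma IsAtom.nonempty {A : Finset V} (h : IsAtom G κ μ A) : A.Nonempty := h.1.nonempty

lemma atom_in_union (hone : OneEnded G)
    (hκmin : ∀ W', IsCut G W' → κ ≤ W'.card)
    (hμmin : ∀ W B : Finset V, Fragment G κ W B → μ ≤ B.card)
    {X Y Z : Finset V} (hX : IsAtom G κ μ X) (hY : IsAtom G κ μ Y) (hZ : IsAtom G κ μ Z)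
    (h : X ⊆ Y ∪ Z) : X = Y ∨ X = Z := by
  obtain ⟨x, hx⟩ := hX.nonempty
  rcases Finset.mem_union.1 (h hx) with h1 | h1
  · exact Or.inl (atom_eq_of_meet hone hκmin hμmin hX hY hx h1)
  · exact Or.inr (atom_eq_of_meet hone hκmin hμmin hX hZ hx h1)

/-- A bi-directional chain of atoms. -/
def Chain (G : SimpleGraph V) [DecidableEq V] [G.LocallyFinite] (κ μ : ℕ)
    (M : ℕ → Finset V) : Prop :=
  (∀ n, IsAtom G κ μ (M n)) ∧ (∀ n, M (n + 1) ⊆ NB G (M n)) ∧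
    (∀ n, M n ⊆ NB G (M (n + 1))) ∧ (∀ n, NB G (M (n + 1)) = M n ∪ M (n + 2))

lemma chain_shift {M : ℕ → Finset V} (h : Chain G κ μ M) : Chain G κ μ (fun n => M (n + 1)) :=
  ⟨fun n => h.1 (n + 1), fun n => h.2.1 (n + 1), fun n => h.2.2.1 (n + 1),
    fun n => h.2.2.2 (n + 1)⟩

lemma chain_cons {M : ℕ → Finset V} (h : Chain G κ μ M) {Y : Finset V}
    (hY : IsAtom G κ μ Y) (h1 : M 0 ⊆ NB G Y) (h2 : Y ⊆ NB G (M 0))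
    (h3 : NB G (M 0) = Y ∪ M 1) :
    Chain G κ μ (fun n => Nat.casesOn n Y (fun m => M m)) := by
  refine ⟨fun n => ?_, fun n => ?_, fun n => ?_, fun n => ?_⟩
  · cases n with
    | zero => exact hY
    | succ m => exact h.1 m
  · cases n with
    | zero => exact h1
    | succ m => exact h.2.1 m
  · cases n with
    | zero => exact h2
    | succ m => exact h.2.2.1 m
  · cases n with
    | zero => exact h3
    | succ m => exact h.2.2.2 m

lemma chain_distinct2 (hconn : G.Connected) (hone : OneEnded G)
    (hκmin : ∀ W', IsCut G W' → κ ≤ W'.card)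
    (hμmin : ∀ W B : Finset V, Fragment G κ W B → μ ≤ B.card)
    (hκ2μ : κ = 2 * μ) (hμpos : 0 < μ)
    {M : ℕ → Finset V} (hM : Chain G κ μ M) (n : ℕ) : M n ≠ M (n + 2) := by
  intro heq2
  have hdec := hM.2.2.2 n
  rw [← heq2, Finset.union_self] at hdec
  have h1 : (NB G (M (n + 1))).card = κ := (hM.1 (n + 1)).card_cut
  have h2 : (M n).card = μ := (hM.1 n).2
  rw [hdec, h2] at h1
  omega

lemma chain_disjoint2 (hconn : G.Connected) (hone : OneEnded G)
    (hκmin : ∀ W', IsCut G W' → κ ≤ W'.card)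
    (hμmin : ∀ W B : Finset V, Fragment G κ W B → μ ≤ B.card)
    (hκ2μ : κ = 2 * μ) (hμpos : 0 < μ)
    {M : ℕ → Finset V} (hM : Chain G κ μ M) (n : ℕ) : ∀ v ∈ M n, v ∉ M (n + 2) := by
  intro v hv hv2
  exact chain_distinct2 hconn hone hκmin hμmin hκ2μ hμpos hM n
    (atom_eq_of_meet hone hκmin hμmin (hM.1 n) (hM.1 (n + 2)) hv hv2)

lemma chain_step_eq (hconn : G.Connected) (hone : OneEnded G)
    (hκmin : ∀ W', IsCut G W' → κ ≤ W'.card)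
    (hμmin : ∀ W B : Finset V, Fragment G κ W B → μ ≤ B.card)
    (hκ2μ : κ = 2 * μ) (hμpos : 0 < μ)
    {M : ℕ → Finset V} (hM : Chain G κ μ M) (n : ℕ) :
    M (n + 2) = NB G (M (n + 1)) \ M n := by
  have hdec := hM.2.2.2 n
  have hdisj : Disjoint (M n) (M (n + 2)) := by
    rw [Finset.disjoint_left]
    exact chain_disjoint2 hconn hone hκmin hμmin hκ2μ hμpos hM n
  rw [hdec, Finset.union_sdiff_cancel_left hdisj]

lemma chain_norep (hconn : G.Connected) (hone : OneEnded G)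
    (hκmin : ∀ W', IsCut G W' → κ ≤ W'.card)
    (hμmin : ∀ W B : Finset V, Fragment G κ W B → μ ≤ B.card)
    (hκ2μ : κ = 2 * μ) (hμpos : 0 < μ)
    {M : ℕ → Finset V} (hM : Chain G κ μ M) :
    ∀ ℓ, 1 ≤ ℓ → ∀ i, M i ≠ M (i + ℓ) := by
  intro ℓ
  induction ℓ using Nat.strong_induction_on with
  | _ ℓ ih =>
    intro hℓ i heq2
    match ℓ, hℓ with
    | 1, _ =>
      obtain ⟨v, hv⟩ := (hM.1 i).nonempty
      have : v ∈ NB G (M i) := hM.2.1 i (by rw [← heq2]; exact hv)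
      exact NB_disjoint v this hv
    | 2, _ => exact chain_distinct2 hconn hone hκmin hμmin hκ2μ hμpos hM i heq2
    | (ℓ' + 3), _ => ?_
    set ℓ := ℓ' + 3 with hℓdef
    -- M (i+1) is an atom inside NB (M (i+ℓ)) = M (i+ℓ-1) ∪ M (i+ℓ+1)
    have hNBi : NB G (M (i + ℓ)) = M (i + (ℓ' + 2)) ∪ M (i + (ℓ + 1)) := by
      have := hM.2.2.2 (i + (ℓ' + 2))
      have e1 : i + (ℓ' + 2) + 1 = i + ℓ := by omega
      have e2 : i + (ℓ' + 2) + 2 = i + (ℓ + 1) := by omega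
      rw [e1, e2] at this
      exact this
    have hsub1 : M (i + 1) ⊆ M (i + (ℓ' + 2)) ∪ M (i + (ℓ + 1)) := by
      rw [← hNBi, ← heq2]
      exact hM.2.1 i
    rcases atom_in_union hone hκmin hμmin (hM.1 (i + 1)) (hM.1 (i + (ℓ' + 2)))
      (hM.1 (i + (ℓ + 1))) hsub1 with hcase | hcase
    · -- smaller gap
      have e3 : i + (ℓ' + 2) = (i + 1) + (ℓ' + 1) := by omega
      rw [e3] at hcase
      exact ih (ℓ' + 1) (by omega) (by omega) (i + 1) hcase
    · -- periodicity
      have e4 : i + (ℓ + 1) = (i + 1) + ℓ := by omega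
      rw [e4] at hcase
      have hper0 : ∀ k, M (i + k) = M (i + k + ℓ) ∧ M (i + k + 1) = M (i + k + 1 + ℓ) := by
        intro k
        induction k with
        | zero =>
          constructor
          · simpa using heq2
          · have : i + 0 + 1 + ℓ = i + 1 + ℓ := by omega
            rw [this]
            simpa using hcase
        | succ m ihm =>
          have hstep1 := chain_step_eq hconn hone hκmin hμmin hκ2μ hμpos hM (i + m)
          have hstep2 := chain_step_eq hconn hone hκmin hμmin hκ2μ hμpos hM (i + m + ℓ)
          have e9 : i + m + ℓ + 1 = i + m + 1 + ℓ := by omega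
          have htarget : M (i + m + 2) = M (i + m + ℓ + 2) := by
            rw [hstep1, hstep2, e9, ← ihm.1, ← ihm.2]
          constructor
          · convert ihm.2 using 2 <;> omega
          · convert htarget using 2 <;> omega
      have hper : ∀ k, M (i + k) = M (i + k + ℓ) := fun k => (hper0 k).1
      -- the finite union of one period is closed under adjacency
      set U : Finset V := (Finset.range ℓ).biUnion (fun k => M (i + k)) with hU
      have hUne : U.Nonempty := by
        obtain ⟨v, hv⟩ := (hM.1 i).nonempty
        exact ⟨v, Finset.mem_biUnion.2 ⟨0, Finset.mem_range.2 (by omega), by simpa using hv⟩⟩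
      have hUclosed : ∀ u ∈ U, ∀ q, G.Adj u q → q ∈ U := by
        intro u hu q hadj
        obtain ⟨k, hk, huk⟩ := Finset.mem_biUnion.1 hu
        rw [Finset.mem_range] at hk
        have hq : q ∈ M (i + k) ∨ q ∈ NB G (M (i + k)) := adj_mem_or_NB huk hadj
        rcases hq with hq | hq
        · exact Finset.mem_biUnion.2 ⟨k, Finset.mem_range.2 hk, hq⟩
        · -- use the NB decomposition
          rcases Nat.eq_zero_or_pos k with rfl | hkpos
          · -- k = 0 : use NB (M i) = NB (M (i + ℓ))
            simp only [Nat.add_zero] at hq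
            have h0 : NB G (M i) = M (i + (ℓ' + 2)) ∪ M (i + (ℓ + 1)) := by
              rw [heq2]; exact hNBi
            rw [h0] at hq
            rcases Finset.mem_union.1 hq with hq | hq
            · exact Finset.mem_biUnion.2 ⟨ℓ' + 2, Finset.mem_range.2 (by omega),
                by simpa using hq⟩
            · have : M (i + (ℓ + 1)) = M (i + 1) := by
                have := hper 1
                have e : i + 1 + ℓ = i + (ℓ + 1) := by omega
                rw [e] at this
                exact this.symm
              rw [this] at hq
              exact Finset.mem_biUnion.2 ⟨1, Finset.mem_range.2 (by omega), by simpa using hq⟩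
          · obtain ⟨k', rfl⟩ : ∃ k', k = k' + 1 := ⟨k - 1, by omega⟩
            have hdec := hM.2.2.2 (i + k')
            have e7 : i + k' + 1 = i + (k' + 1) := by omega
            rw [e7] at hdec
            rw [hdec] at hq
            rcases Finset.mem_union.1 hq with hq | hq
            · exact Finset.mem_biUnion.2 ⟨k', Finset.mem_range.2 (by omega), hq⟩
            · by_cases h8 : k' + 2 < ℓ
              · exact Finset.mem_biUnion.2 ⟨k' + 2, Finset.mem_range.2 h8,
                  by
                    have e8 : i + k' + 2 = i + (k' + 2) := by omega
                    rw [e8] at hq; exact hq⟩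
              · have e9 : k' + 2 = ℓ := by omega
                have : M (i + k' + 2) = M i := by
                  have := hper 0
                  simp only [Nat.add_zero] at this
                  rw [this]
                  congr 1
                  omega
                rw [this] at hq
                exact Finset.mem_biUnion.2 ⟨0, Finset.mem_range.2 (by omega), by simpa using hq⟩
      exact no_finite_closed hconn (infinite_V hone) hUne hUclosed

end Chains

section Chains2
variable [DecidableEq V] [G.LocallyFinite] {κ μ : ℕ}

lemma walk_support_in_comp {W : Finset V} {x y : V} (w : G.Walk x y)
    (hw : ∀ v ∈ w.support, v ∉ W) : ∀ v ∈ w.support, v ∈ comp G W x := by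
  intro v hv
  have hwt := w.takeUntil v hv
  exact ⟨w.takeUntil v hv, fun u hu => hw u (Walk.support_takeUntil_subset _ _ hu)⟩

lemma atom_areach {A K : Finset V} (hA : IsAtom G κ μ A) (hAK : ∀ v ∈ A, v ∉ K)
    {x y : V} (hx : x ∈ A) (hy : y ∈ A) : AReach G K x y := by
  obtain ⟨-, -, x₀, hx₀, hcomp⟩ := hA.1
  have hxc : x ∈ comp G (NB G A) x₀ := by rw [← hcomp]; exact_mod_cast hx
  have hyc : y ∈ comp G (NB G A) x₀ := by rw [← hcomp]; exact_mod_cast hy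
  obtain ⟨w, hw⟩ := AReach.trans (AReach.symm hxc) hyc
  refine ⟨w, fun v hv => ?_⟩
  have h1 : v ∈ comp G (NB G A) x := walk_support_in_comp w hw v hv
  have h2 : comp G (NB G A) x = comp G (NB G A) x₀ := comp_eq_of_mem hxc
  rw [h2, ← hcomp] at h1
  exact hAK v (by exact_mod_cast h1)

lemma rev_sub (hone : OneEnded G)
    (hκmin : ∀ W', IsCut G W' → κ ≤ W'.card)
    (hμmin : ∀ W B : Finset V, Fragment G κ W B → μ ≤ B.card)
    {C P : Finset V} (hC : IsAtom G κ μ C) (hP : IsAtom G κ μ P)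
    (hPC : P ⊆ NB G C) : C ⊆ NB G P := by
  obtain ⟨p, hp⟩ := hP.nonempty
  obtain ⟨c, hc, hadj⟩ := NB_adj (hPC hp)
  have hcP : c ∉ P := fun hcc => NB_disjoint c (hPC hcc) hc
  have hcNB : c ∈ NB G P := mem_NB_iff.2 ⟨hcP, p, hp, hadj.symm⟩
  exact atom_subset_cut hone hκmin hμmin hP hC hc hcNB

lemma other_atom (hone : OneEnded G)
    (htrans : ∀ u v : V, ∃ α : G ≃g G, α u = v)
    (hκmin : ∀ W', IsCut G W' → κ ≤ W'.card)
    (hμmin : ∀ W B : Finset V, Fragment G κ W B → μ ≤ B.card)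
    (hκ2μ : κ = 2 * μ) (hμpos : 0 < μ)
    {C P : Finset V} (hC : IsAtom G κ μ C) (hP : IsAtom G κ μ P)
    (hPC : P ⊆ NB G C) :
    IsAtom G κ μ (NB G C \ P) ∧ C ⊆ NB G (NB G C \ P) ∧ (NB G C \ P) ⊆ NB G C ∧
      NB G C = P ∪ (NB G C \ P) := by
  have hNBcard : (NB G C).card = κ := hC.card_cut
  have hsd : (NB G C \ P).card = μ := by
    rw [Finset.card_sdiff_of_subset hPC, hNBcard, hP.2]; omega
  obtain ⟨t', ht'⟩ : (NB G C \ P).Nonempty := Finset.card_pos.1 (by omega)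
  obtain ⟨At, hAt, ht'At⟩ := exists_atom_mem htrans ⟨C, hC⟩ t'
  have hAtNB : At ⊆ NB G C :=
    atom_subset_cut hone hκmin hμmin hC hAt ht'At (Finset.mem_sdiff.1 ht').1
  have hAtP : ∀ v ∈ At, v ∉ P := by
    intro v hv hvP
    have := atom_eq_of_meet hone hκmin hμmin hAt hP hv hvP
    rw [this] at ht'At
    exact (Finset.mem_sdiff.1 ht').2 ht'At
  have hAtsub : At ⊆ NB G C \ P := fun v hv => Finset.mem_sdiff.2 ⟨hAtNB hv, hAtP v hv⟩
  have hAteq : At = NB G C \ P :=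
    Finset.eq_of_subset_of_card_le hAtsub (by rw [hAt.2, hsd])
  have hatom : IsAtom G κ μ (NB G C \ P) := hAteq ▸ hAt
  refine ⟨hatom, ?_, fun v hv => (Finset.mem_sdiff.1 hv).1,
    (Finset.union_sdiff_of_subset hPC).symm⟩
  obtain ⟨c, hc, hadjc⟩ := NB_adj (Finset.mem_sdiff.1 ht').1
  have hcn : c ∉ NB G C \ P := fun hcc => NB_disjoint c (Finset.mem_sdiff.1 hcc).1 hc
  have hcNB : c ∈ NB G (NB G C \ P) := mem_NB_iff.2 ⟨hcn, t', ht', hadjc.symm⟩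
  exact atom_subset_cut hone hκmin hμmin hatom hC hc hcNB

end Chains2

section TwoMu
variable [DecidableEq V] [G.LocallyFinite] {κ μ : ℕ}

/-- iterated "other atom" sequence -/
def pairSeq (G : SimpleGraph V) [DecidableEq V] [G.LocallyFinite] (X Y : Finset V) :
    ℕ → Finset V × Finset V
  | 0 => (X, Y)
  | (n + 1) => ((pairSeq G X Y n).2, NB G (pairSeq G X Y n).2 \ (pairSeq G X Y n).1)

def seqR (G : SimpleGraph V) [DecidableEq V] [G.LocallyFinite] (X Y : Finset V) (n : ℕ) :
    Finset V := (pairSeq G X Y n).1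

lemma seqR_zero {X Y : Finset V} : seqR G X Y 0 = X := rfl
lemma seqR_one {X Y : Finset V} : seqR G X Y 1 = Y := rfl
lemma seqR_rec {X Y : Finset V} (n : ℕ) :
    seqR G X Y (n + 2) = NB G (seqR G X Y (n + 1)) \ seqR G X Y n := rfl

/-- prepend an element to a sequence -/
def consSeq (Y : Finset V) (M : ℕ → Finset V) : ℕ → Finset V
  | 0 => Y
  | (n + 1) => M n

/-- concatenation of reversed prefix of L with R -/
def catSeq (L R' : ℕ → Finset V) : ℕ → ℕ → Finset V
  | 0 => R'
  | (i + 1) => consSeq (L (i + 1)) (catSeq L R' i)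

lemma catSeq_left {L R' : ℕ → Finset V} (h0 : L 0 = R' 0) :
    ∀ i n, n ≤ i → catSeq L R' i n = L (i - n) := by
  intro i
  induction i with
  | zero => intro n hn; interval_cases n; exact h0.symm
  | succ i ih =>
    intro n hn
    cases n with
    | zero => rfl
    | succ m =>
      have : catSeq L R' (i + 1) (m + 1) = catSeq L R' i m := rfl
      rw [this, ih m (by omega)]
      congr 1
      omega

lemma catSeq_right {L R' : ℕ → Finset V} :
    ∀ i k, catSeq L R' i (i + k) = R' k := by
  intro i
  induction i with
  | zero => intro k; rw [Nat.zero_add]; rfl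
  | succ i ih =>
    intro k
    have e : i + 1 + k = (i + k) + 1 := by omega
    rw [e]
    show catSeq L R' i (i + k) = R' k
    exact ih k

lemma catSeq_chain (hLchain : Chain G κ μ L) (hRchain : Chain G κ μ R')
    (h0 : L 0 = R' 0) (hjunction : NB G (L 0) = L 1 ∪ R' 1) :
    ∀ i, Chain G κ μ (catSeq L R' i) := by
  intro i
  induction i with
  | zero => exact hRchain
  | succ i ih =>
    have hcons := chain_cons ih (hLchain.1 (i + 1)) ?_ ?_ ?_
    · have : (fun n => Nat.casesOn n (L (i + 1)) (fun m => catSeq L R' i m)) =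
        catSeq L R' (i + 1) := by
        funext n
        cases n <;> rfl
      rwa [this] at hcons
    · -- catSeq i 0 ⊆ NB (L (i+1))
      rw [catSeq_left h0 i 0 (by omega)]
      simpa using hLchain.2.2.1 i
    · -- L (i+1) ⊆ NB (catSeq i 0)
      rw [catSeq_left h0 i 0 (by omega)]
      simpa using hLchain.2.1 i
    · -- NB (catSeq i 0) = L (i+1) ∪ catSeq i 1
      rw [catSeq_left h0 i 0 (by omega)]
      simp only [Nat.sub_zero]
      cases i with
      | zero =>
        have h1 : catSeq L R' 0 1 = R' 1 := rfl
        rw [h1, hjunction]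
      | succ i' =>
        have h1 : catSeq L R' (i' + 1) 1 = L i' := by
          rw [catSeq_left h0 (i' + 1) 1 (by omega)]
          congr 1
        rw [h1]
        have := hLchain.2.2.2 i'
        rw [this]
        exact Finset.union_comm _ _

lemma kappa_ne_2mu (hconn : G.Connected) (hone : OneEnded G)
    (htrans : ∀ u v : V, ∃ α : G ≃g G, α u = v)
    (hκmin : ∀ W', IsCut G W' → κ ≤ W'.card)
    (hμmin : ∀ W B : Finset V, Fragment G κ W B → μ ≤ B.card)
    (hatom : ∃ A, IsAtom G κ μ A) (hμpos : 0 < μ) : κ ≠ 2 * μ := by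
  intro hκ2μ
  obtain ⟨A, hA⟩ := hatom
  have hScard : (NB G A).card = κ := hA.card_cut
  obtain ⟨t, htS⟩ : (NB G A).Nonempty := Finset.card_pos.1 (by omega)
  obtain ⟨A₁, hA₁, htA₁⟩ := exists_atom_mem htrans ⟨A, hA⟩ t
  have hA₁S : A₁ ⊆ NB G A := atom_subset_cut hone hκmin hμmin hA hA₁ htA₁ htS
  obtain ⟨hA₂atom, hArev2, hA₂S, hSdec⟩ :=
    other_atom hone htrans hκmin hμmin hκ2μ hμpos hA hA₁ hA₁S
  set A₂ : Finset V := NB G A \ A₁ with hA₂def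
  have hArev1 : A ⊆ NB G A₁ := rev_sub hone hκmin hμmin hA hA₁ hA₁S
  -- the two rays
  set R : ℕ → Finset V := seqR G A A₂ with hRdef
  set L : ℕ → Finset V := seqR G A A₁ with hLdef
  have hRinv : ∀ n, IsAtom G κ μ (R n) ∧ IsAtom G κ μ (R (n + 1)) ∧
      R (n + 1) ⊆ NB G (R n) ∧ R n ⊆ NB G (R (n + 1)) := by
    intro n
    induction n with
    | zero => exact ⟨hA, hA₂atom, hA₂S, hArev2⟩
    | succ m ihm =>
      obtain ⟨h1, h2, h3, h4⟩ := ihm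
      obtain ⟨o1, o2, o3, o4⟩ := other_atom hone htrans hκmin hμmin hκ2μ hμpos h2 h1 h4
      have he : R (m + 2) = NB G (R (m + 1)) \ R m := seqR_rec m
      exact ⟨h2, by rw [he]; exact o1, by rw [he]; exact o3, by rw [he]; exact o2⟩
  have hRchain : Chain G κ μ R := by
    refine ⟨fun n => (hRinv n).1, fun n => (hRinv n).2.2.1, fun n => (hRinv n).2.2.2, fun n => ?_⟩
    have he : R (n + 2) = NB G (R (n + 1)) \ R n := seqR_rec n
    rw [he]
    exact (Finset.union_sdiff_of_subset ((hRinv n).2.2.2)).symm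
  have hLinv : ∀ n, IsAtom G κ μ (L n) ∧ IsAtom G κ μ (L (n + 1)) ∧
      L (n + 1) ⊆ NB G (L n) ∧ L n ⊆ NB G (L (n + 1)) := by
    intro n
    induction n with
    | zero => exact ⟨hA, hA₁, hA₁S, hArev1⟩
    | succ m ihm =>
      obtain ⟨h1, h2, h3, h4⟩ := ihm
      obtain ⟨o1, o2, o3, o4⟩ := other_atom hone htrans hκmin hμmin hκ2μ hμpos h2 h1 h4
      have he : L (m + 2) = NB G (L (m + 1)) \ L m := seqR_rec m
      exact ⟨h2, by rw [he]; exact o1, by rw [he]; exact o3, by rw [he]; exact o2⟩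
  have hLchain : Chain G κ μ L := by
    refine ⟨fun n => (hLinv n).1, fun n => (hLinv n).2.2.1, fun n => (hLinv n).2.2.2, fun n => ?_⟩
    have he : L (n + 2) = NB G (L (n + 1)) \ L n := seqR_rec n
    rw [he]
    exact (Finset.union_sdiff_of_subset ((hLinv n).2.2.2)).symm
  have hL0 : L 0 = A := rfl
  have hL1 : L 1 = A₁ := rfl
  have hR0 : R 0 = A := rfl
  have hR1 : R 1 = A₂ := rfl
  have h00 : L 0 = R 0 := rfl
  have hjunction : NB G (L 0) = L 1 ∪ R 1 := by rw [hL0, hL1, hR1]; exact hSdec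
  have hCMchain : ∀ i, Chain G κ μ (catSeq L R i) :=
    catSeq_chain hLchain hRchain h00 hjunction
  -- distinctness facts
  have dLR : ∀ a b, 1 ≤ a + b → L a ≠ R b := by
    intro a b hab heq
    have h1 := chain_norep hconn hone hκmin hμmin hκ2μ hμpos (hCMchain a) (a + b) hab 0
    rw [Nat.zero_add, catSeq_right a b] at h1
    have h2 : catSeq L R a 0 = L a := by
      rw [catSeq_left h00 a 0 (by omega)]
      congr 1
    rw [h2] at h1
    exact h1 heq
  have dLL : ∀ i j, i < j → L i ≠ L j := by
    intro i j hij heq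
    have h1 := chain_norep hconn hone hκmin hμmin hκ2μ hμpos hLchain (j - i) (by omega) i
    rw [show i + (j - i) = j by omega] at h1
    exact h1 heq
  have dRR : ∀ i j, i < j → R i ≠ R j := by
    intro i j hij heq
    have h1 := chain_norep hconn hone hκmin hμmin hκ2μ hμpos hRchain (j - i) (by omega) i
    rw [show i + (j - i) = j by omega] at h1
    exact h1 heq
  have hdisj : ∀ {X Y : Finset V}, IsAtom G κ μ X → IsAtom G κ μ Y → X ≠ Y →
      ∀ v ∈ X, v ∉ Y := by
    intro X Y hX hY hne v hv hv'
    exact hne (atom_eq_of_meet hone hκmin hμmin hX hY hv hv')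
  -- the separating set
  set K : Finset V := A ∪ A₁ ∪ A₂ with hK
  have hLK : ∀ i, 2 ≤ i → ∀ v ∈ L i, v ∉ K := by
    intro i hi v hv hvK
    rcases Finset.mem_union.1 hvK with h | h
    · rcases Finset.mem_union.1 h with h | h
      · exact hdisj (hLchain.1 i) hA (fun hc => dLL 0 i (by omega) (by rw [hL0]; exact hc.symm)) v hv h
      · exact hdisj (hLchain.1 i) hA₁ (fun hc => dLL 1 i (by omega) (by rw [hL1]; exact hc.symm)) v hv h
    · exact hdisj (hLchain.1 i) hA₂atom (fun hc => dLR i 1 (by omega) (by rw [hR1]; exact hc)) v hv h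
  have hRK : ∀ i, 2 ≤ i → ∀ v ∈ R i, v ∉ K := by
    intro i hi v hv hvK
    rcases Finset.mem_union.1 hvK with h | h
    · rcases Finset.mem_union.1 h with h | h
      · exact hdisj (hRchain.1 i) hA (fun hc => dRR 0 i (by omega) (by rw [hR0]; exact hc.symm)) v hv h
      · exact hdisj (hRchain.1 i) hA₁ (fun hc => dLR 1 i (by omega) (by rw [hL1, hc])) v hv h
    · exact hdisj (hRchain.1 i) hA₂atom (fun hc => dRR 1 i (by omega) (by rw [hR1]; exact hc.symm)) v hv h
  -- the left and right infinite components
  obtain ⟨xL, hxL⟩ := (hLchain.1 2).nonempty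
  obtain ⟨xR, hxR⟩ := (hRchain.1 2).nonempty
  have hxLK : xL ∉ K := hLK 2 le_rfl xL hxL
  have hxRK : xR ∉ K := hRK 2 le_rfl xR hxR
  set Lset : Set V := {v | ∃ i, 2 ≤ i ∧ v ∈ L i} with hLset
  have hclosL : ∀ p ∈ Lset, ∀ q, G.Adj p q → q ∉ K → q ∈ Lset := by
    rintro p ⟨i, hi, hpi⟩ q hadj hqK
    rcases adj_mem_or_NB hpi hadj with h | h
    · exact ⟨i, hi, h⟩
    · obtain ⟨i', rfl⟩ : ∃ i', i = i' + 1 := ⟨i - 1, by omega⟩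
      rw [hLchain.2.2.2 i'] at h
      rcases Finset.mem_union.1 h with h | h
      · rcases Nat.lt_or_ge i' 2 with h2 | h2
        · -- i' = 1, so q ∈ A₁ ⊆ K
          have : i' = 1 := by omega
          subst this
          exact absurd (Finset.mem_union_left _ (Finset.mem_union_right _ (hL1 ▸ h))) hqK
        · exact ⟨i', h2, h⟩
      · exact ⟨i' + 2, by omega, h⟩
  have hLcomp : ∀ i, ∀ v ∈ L (2 + i), v ∈ comp G K xL := by
    intro i
    induction i with
    | zero => exact fun v hv => atom_areach (hLchain.1 2) (hLK 2 le_rfl) hxL hv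
    | succ m ihm =>
      intro v hv
      have hsub : L (2 + (m + 1)) ⊆ NB G (L (2 + m)) := by
        have := hLchain.2.1 (2 + m)
        rwa [show 2 + m + 1 = 2 + (m + 1) by omega] at this
      obtain ⟨a, ha, hadj⟩ := NB_adj (hsub hv)
      exact AReach.adj (ihm a ha) hadj (hLK (2 + (m + 1)) (by omega) v hv)
  have hclosR : ∀ p ∈ {v | ∃ i, 2 ≤ i ∧ v ∈ R i}, ∀ q, G.Adj p q → q ∉ K →
      q ∈ {v : V | ∃ i, 2 ≤ i ∧ v ∈ R i} := by
    rintro p ⟨i, hi, hpi⟩ q hadj hqK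
    rcases adj_mem_or_NB hpi hadj with h | h
    · exact ⟨i, hi, h⟩
    · obtain ⟨i', rfl⟩ : ∃ i', i = i' + 1 := ⟨i - 1, by omega⟩
      rw [hRchain.2.2.2 i'] at h
      rcases Finset.mem_union.1 h with h | h
      · rcases Nat.lt_or_ge i' 2 with h2 | h2
        · have : i' = 1 := by omega
          subst this
          exact absurd (Finset.mem_union_right _ (hR1 ▸ h)) hqK
        · exact ⟨i', h2, h⟩
      · exact ⟨i' + 2, by omega, h⟩
  have hRcomp : ∀ i, ∀ v ∈ R (2 + i), v ∈ comp G K xR := by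
    intro i
    induction i with
    | zero => exact fun v hv => atom_areach (hRchain.1 2) (hRK 2 le_rfl) hxR hv
    | succ m ihm =>
      intro v hv
      have hsub : R (2 + (m + 1)) ⊆ NB G (R (2 + m)) := by
        have := hRchain.2.1 (2 + m)
        rwa [show 2 + m + 1 = 2 + (m + 1) by omega] at this
      obtain ⟨a, ha, hadj⟩ := NB_adj (hsub hv)
      exact AReach.adj (ihm a ha) hadj (hRK (2 + (m + 1)) (by omega) v hv)
  -- both components are infinite
  have hLinf : (comp G K xL).Infinite := by
    have hne : ∀ n : ℕ, (L (2 + n)).Nonempty := fun n => (hLchain.1 (2 + n)).nonempty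
    refine Set.infinite_of_injective_forall_mem
      (f := fun n : ℕ => (hne n).choose) ?_ ?_
    · intro n m hnm
      simp only at hnm
      by_contra hne'
      have hm1 : (hne n).choose ∈ L (2 + n) := (hne n).choose_spec
      have hm2 : (hne n).choose ∈ L (2 + m) := by rw [hnm]; exact (hne m).choose_spec
      rcases Nat.lt_or_ge n m with h | h
      · exact hdisj (hLchain.1 (2 + n)) (hLchain.1 (2 + m))
          (dLL (2 + n) (2 + m) (by omega)) _ hm1 hm2
      · have h' : m < n := by omega
        exact hdisj (hLchain.1 (2 + m)) (hLchain.1 (2 + n))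
          (dLL (2 + m) (2 + n) (by omega)) _ hm2 hm1
    · intro n
      exact hLcomp n _ (hne n).choose_spec
  have hRinf : (comp G K xR).Infinite := by
    have hne : ∀ n : ℕ, (R (2 + n)).Nonempty := fun n => (hRchain.1 (2 + n)).nonempty
    refine Set.infinite_of_injective_forall_mem
      (f := fun n : ℕ => (hne n).choose) ?_ ?_
    · intro n m hnm
      simp only at hnm
      by_contra hne'
      have hm1 : (hne n).choose ∈ R (2 + n) := (hne n).choose_spec
      have hm2 : (hne n).choose ∈ R (2 + m) := by rw [hnm]; exact (hne m).choose_spec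
      rcases Nat.lt_or_ge n m with h | h
      · exact hdisj (hRchain.1 (2 + n)) (hRchain.1 (2 + m))
          (dRR (2 + n) (2 + m) (by omega)) _ hm1 hm2
      · have h' : m < n := by omega
        exact hdisj (hRchain.1 (2 + m)) (hRchain.1 (2 + n))
          (dRR (2 + m) (2 + n) (by omega)) _ hm2 hm1
    · intro n
      exact hRcomp n _ (hne n).choose_spec
  -- contradiction with one-endedness
  obtain ⟨z, hz, hzinf, hzuniq⟩ := one_end_comp hone K
  have h1 : AReach G K z xL := hzuniq xL hxLK hLinf
  have h2 : AReach G K z xR := hzuniq xR hxRK hRinf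
  have h3 : AReach G K xL xR := AReach.trans (AReach.symm h1) h2
  have h4 : xR ∈ comp G K xL := h3
  have h5 : xR ∈ Lset :=
    comp_subset_closed (P := Lset) (x := xL) ⟨2, le_rfl, hxL⟩ hclosL h4
  obtain ⟨i, hi, hxRi⟩ := h5
  exact hdisj (hLchain.1 i) (hRchain.1 2) (dLR i 2 (by omega)) xR hxRi hxR

end TwoMu

end BW

open BW in
/-- Babai–Watkins: if `G` is a connected, locally finite, vertex-transitive graph with
exactly one end and common vertex degree `d`, then the vertex connectivity of `G` is at
least `3(d+1)/4`, i.e. any finite vertex set whose removal disconnects `G` has size at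
least `3(d+1)/4`. -/
theorem connectivity_ge_of_oneEnded_transitive
    {V : Type*} (G : SimpleGraph V) [G.LocallyFinite]
    (hconn : G.Connected)
    (htrans : ∀ u v : V, ∃ α : G ≃g G, α u = v)
    (hone : OneEnded G)
    (d : ℕ) (hd : ∀ v : V, G.degree v = d) :
    ∀ S : Finset V, ¬ (G.induce ((S : Set V)ᶜ)).Connected → 3 * (d + 1) ≤ 4 * S.card := by
  classical
  intro S hS
  have hinf : (Set.univ : Set V).Infinite := infinite_V hone
  haveI : Infinite V := Set.infinite_univ_iff.1 hinf
  -- S is a cut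
  have hScut : IsCut G S := by
    have hne : Nonempty ((↑S : Set V)ᶜ : Set V) := by
      obtain ⟨v, hv⟩ := Infinite.exists_notMem_finset S
      exact ⟨⟨v, by exact_mod_cast hv⟩⟩
    have hpre : ¬ (G.induce ((S : Set V)ᶜ)).Preconnected := by
      intro hp
      haveI := hne
      exact hS ⟨hp⟩
    rw [SimpleGraph.Preconnected] at hpre
    push_neg at hpre
    obtain ⟨⟨x, hx⟩, ⟨y, hy⟩, hr⟩ := hpre
    have hx' : x ∉ S := by exact_mod_cast hx
    have hy' : y ∉ S := by exact_mod_cast hy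
    exact ⟨x, y, hx', hy', fun h => hr ((areach_iff_reachable hx' hy').1 h)⟩
  -- the connectivity κ
  have hPex : ∃ n, ∃ W : Finset V, IsCut G W ∧ W.card = n := ⟨S.card, S, hScut, rfl⟩
  set κ := Nat.find hPex with hκdef
  obtain ⟨W₀, hW₀cut, hW₀card⟩ := Nat.find_spec hPex
  have hκmin : ∀ W : Finset V, IsCut G W → κ ≤ W.card :=
    fun W h => Nat.find_min' hPex ⟨W, h, rfl⟩
  have hκpos : 0 < κ := by
    rcases Nat.eq_zero_or_pos κ with h0 | h
    · exfalso
      rw [← hκdef, h0] at hW₀card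
      obtain rfl : W₀ = ∅ := Finset.card_eq_zero.1 hW₀card
      obtain ⟨x, y, -, -, hr⟩ := hW₀cut
      obtain ⟨w⟩ := hconn.preconnected x y
      exact absurd ⟨w, fun v _ => Finset.notMem_empty v⟩ hr
    · exact h
  -- minimum fragment size μ
  obtain ⟨A₀, hA₀⟩ := exists_fragment (κ := κ) hone hW₀cut hW₀card
  have hQex : ∃ m, ∃ W B : Finset V, Fragment G κ W B ∧ B.card = m :=
    ⟨A₀.card, W₀, A₀, hA₀, rfl⟩
  set μ := Nat.find hQex with hμdef
  obtain ⟨Wm, Am, hfrm, hcardm⟩ := Nat.find_spec hQex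
  have hμmin : ∀ W B : Finset V, Fragment G κ W B → μ ≤ B.card :=
    fun W B h => Nat.find_min' hQex ⟨W, B, h, rfl⟩
  -- a canonical atom
  obtain ⟨hfrcanon, -⟩ := frag_canon hinf hκmin hfrm
  have hatomA : IsAtom G κ μ Am := ⟨hfrcanon, hcardm⟩
  have hμpos : 0 < μ := by
    obtain ⟨a, ha⟩ := hfrm.nonempty
    have := Finset.card_pos.2 ⟨a, ha⟩
    omega
  -- degree bound
  obtain ⟨a, ha⟩ := hfrm.nonempty
  have hdeg : d + 1 ≤ μ + κ := by
    have := deg_bound hd ha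
    rw [hatomA.card_cut] at this
    omega
  -- μ divides κ
  have hdvd : μ ∣ κ := by
    have h1 : ∀ v ∈ NB G Am, ∃ A, IsAtom G κ μ A ∧ v ∈ A ∧ A ⊆ NB G Am := by
      intro v hv
      obtain ⟨A, hAat, hvA⟩ := exists_atom_mem htrans ⟨Am, hatomA⟩ v
      exact ⟨A, hAat, hvA, atom_subset_cut hone hκmin hμmin hatomA hAat hvA hv⟩
    have := mu_dvd_of_atomized hone hκmin hμmin hμpos (NB G Am).card (NB G Am) rfl h1
    rwa [hatomA.card_cut] at this
  -- κ is at least 3μ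
  have hne1 : κ ≠ μ :=
    kappa_ne_mu hconn hone htrans hκmin hμmin ⟨Am, hatomA⟩ hκpos
  have hne2 : κ ≠ 2 * μ :=
    kappa_ne_2mu hconn hone htrans hκmin hμmin ⟨Am, hatomA⟩ hμpos
  have h3μ : 3 * μ ≤ κ := by
    obtain ⟨c, hc⟩ := hdvd
    match c, hc with
    | 0, hc => omega
    | 1, hc => omega
    | 2, hc => exact absurd (by omega : κ = 2 * μ) hne2
    | (c + 3), hc =>
      have : μ * 3 ≤ μ * (c + 3) := Nat.mul_le_mul_left μ (by omega)
      omega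
  -- conclusion
  have hκS : κ ≤ S.card := hκmin S hScut
  omega
end
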